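/- arXiv:0901.4184 — 5 statements merged into one kernel-verified Lean document; each statement's English description precedes it below -/
import Mathlib

section
/- With probability at least 1 − δ over the draw of the i.i.d. training sample Z^n, every classifier h in the countable class ℋ satisfies |R_D(h) − R̂_D(h)| ≤ φ_D(h, δ). This holds for every n ≥ 1, every 0 < δ < 1, and every underlying probability distribution P on 𝒳 × {0,1}. -/
open MeasureTheory ENNReal

/-- Symmetric deviation between two extended nonnegative reals. -/
noncomputable def edistE (a b : ℝ≥0∞) : ℝ≥0∞ := (a - b) ⊔ (b - a)

/-- The false discovery rate `R_D(h) = P(Y = 0 | h(X) = 1)`, equal to `∞` when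
`P(h(X) = 1) = 0`. -/
noncomputable def RD {𝓧 : Type*} [MeasurableSpace 𝓧] (P : Measure (𝓧 × Bool))
    (h : 𝓧 → Bool) : ℝ≥0∞ :=
  if 0 < P {z : 𝓧 × Bool | h z.1 = true} then
    P {z : 𝓧 × Bool | z.2 = false ∧ h z.1 = true} / P {z : 𝓧 × Bool | h z.1 = true}
  else ⊤

/-- The empirical number of discoveries `n_D(h, Zⁿ)`. -/
def nD {𝓧 : Type*} {n : ℕ} (h : 𝓧 → Bool) (ω : Fin n → 𝓧 × Bool) : ℕ :=
  (Finset.univ.filter fun i => h (ω i).1 = true).card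

/-- The empirical false discovery rate `R̂_D(h)`, equal to `∞` when `n_D(h, Zⁿ) = 0`. -/
noncomputable def RhatD {𝓧 : Type*} {n : ℕ} (h : 𝓧 → Bool) (ω : Fin n → 𝓧 × Bool) : ℝ≥0∞ :=
  if 0 < nD h ω then
    ((Finset.univ.filter fun i => (ω i).2 = false ∧ h (ω i).1 = true).card : ℝ≥0∞)
      / (nD h ω : ℝ≥0∞)
  else ⊤

/-- The penalty `√((⟦h⟧ log 2 + log(2/δ)) / (2 m))` (with `m` the number of
(non)discoveries), equal to `∞` when `m = 0`. -/
noncomputable def pen (c δ : ℝ) (m : ℕ) : ℝ≥0∞ :=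
  if 0 < m then ENNReal.ofReal (Real.sqrt ((c * Real.log 2 + Real.log (2 / δ)) / (2 * m)))
  else ⊤

open scoped Classical

open Real Finset

/-- Hoeffding's lemma for a Bernoulli variable: `1 - p + p e^t ≤ exp (t p + t²/8)`. -/
lemma bernoulli_mgf (p t : ℝ) (hp0 : 0 ≤ p) (hp1 : p ≤ 1) (ht : 0 ≤ t) :
    1 - p + p * exp t ≤ exp (t * p + t ^ 2 / 8) := by
  set d : ℝ → ℝ := fun s => 1 - p + p * exp s with hd
  have hdpos : ∀ s, 0 < d s := by
    intro s
    have he := exp_pos s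
    have hds : d s = 1 - p + p * rexp s := rfl
    rw [hds]
    rcases hp0.eq_or_lt with h | h
    · rw [← h]; norm_num
    · nlinarith [mul_pos h he]
  set u : ℝ → ℝ := fun s => p * exp s / d s with hu
  have hud : ∀ s, HasDerivAt u (u s * (1 - u s)) s := by
    intro s
    have hN : HasDerivAt (fun s => p * exp s) (p * exp s) s := (Real.hasDerivAt_exp s).const_mul p
    have hD : HasDerivAt d (p * exp s) s := by
      simpa [hd] using ((Real.hasDerivAt_exp s).const_mul p).const_add (1 - p)
    have h := hN.div hD (hdpos s).ne'
    have h' : HasDerivAt u ((p * exp s * d s - p * exp s * (p * exp s)) / d s ^ 2) s := h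
    convert h' using 1
    have hne := (hdpos s).ne'
    simp only [hu]
    field_simp
  set G : ℝ → ℝ := fun s => p + s / 4 - u s with hG
  have hGd : ∀ s, HasDerivAt G (1 / 4 - u s * (1 - u s)) s := by
    intro s
    have h1 : HasDerivAt (fun s : ℝ => p + s / 4) (1 / 4) s := by
      simpa using ((hasDerivAt_id s).div_const 4).const_add p
    exact h1.sub (hud s)
  have hGmono : Monotone G := by
    refine monotone_of_deriv_nonneg (fun s => (hGd s).differentiableAt) fun s => ?_
    rw [(hGd s).deriv]
    nlinarith [sq_nonneg (u s - 1 / 2)]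
  have hu0 : u 0 = p := by simp [hu, hd]
  have hG0 : G 0 = 0 := by simp [hG, hu0]
  have hGnn : ∀ s, 0 ≤ s → 0 ≤ G s := fun s hs => hG0 ▸ hGmono hs
  set g : ℝ → ℝ := fun s => s * p + s ^ 2 / 8 - log (d s) with hg
  have hgd : ∀ s, HasDerivAt g (G s) s := by
    intro s
    have hD : HasDerivAt d (p * exp s) s := by
      simpa [hd] using ((Real.hasDerivAt_exp s).const_mul p).const_add (1 - p)
    have hlog : HasDerivAt (fun s => log (d s)) (p * exp s / d s) s := hD.log (hdpos s).ne'
    have h1 : HasDerivAt (fun s : ℝ => s * p + s ^ 2 / 8) (p + s / 4) s := by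
      have ha : HasDerivAt (fun s : ℝ => s * p) p s := by
        simpa using (hasDerivAt_id s).mul_const p
      have hb : HasDerivAt (fun s : ℝ => s ^ 2 / 8) (s / 4) s := by
        have := ((hasDerivAt_pow 2 s).div_const 8)
        exact this.congr_deriv (by push_cast; ring)
      exact ha.add hb
    exact h1.sub hlog
  have hgmono : MonotoneOn g (Set.Ici 0) := by
    refine monotoneOn_of_deriv_nonneg (convex_Ici 0)
      (fun s _ => ((hgd s).differentiableAt).continuousAt.continuousWithinAt)
      (fun s _ => ((hgd s).differentiableAt).differentiableWithinAt) fun s hs => ?_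
    rw [(hgd s).deriv]
    exact hGnn s (le_of_lt (by simpa using hs))
  have hg0 : g 0 = 0 := by simp [hg, hd]
  have hgt : 0 ≤ g t := by
    have := hgmono (Set.self_mem_Ici) (Set.mem_Ici.2 ht) ht
    simpa [hg0] using this
  have hlog : log (d t) ≤ t * p + t ^ 2 / 8 := by simp [hg] at hgt; linarith
  calc d t = exp (log (d t)) := (exp_log (hdpos t)).symm
    _ ≤ exp (t * p + t ^ 2 / 8) := exp_le_exp.2 hlog

/-- Chernoff upper tail bound for the binomial distribution. -/
lemma tail_upper (m : ℕ) (p ε : ℝ) (hp0 : 0 ≤ p) (hp1 : p ≤ 1) (hε : 0 ≤ ε) :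
    ∑ k ∈ Finset.range (m+1),
      (if (m:ℝ) * (p+ε) < k then (m.choose k : ℝ) * p^k * (1-p)^(m-k) else 0)
      ≤ exp (-(2 * m * ε^2)) := by
  have hq : (0:ℝ) ≤ 1 - p := by linarith
  have key : ∀ k ∈ Finset.range (m+1),
      (if (m:ℝ) * (p+ε) < k then (m.choose k : ℝ) * p^k * (1-p)^(m-k) else 0)
        ≤ (p*exp (4*ε))^k * (1-p)^(m-k) * (m.choose k : ℝ) * exp (-(4*ε*((m:ℝ)*(p+ε)))) := by
    intro k _
    have hC : (0:ℝ) ≤ m.choose k := Nat.cast_nonneg _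
    have hbase : (0:ℝ) ≤ (m.choose k : ℝ) * p^k * (1-p)^(m-k) :=
      mul_nonneg (mul_nonneg hC (pow_nonneg hp0 k)) (pow_nonneg hq _)
    split_ifs with h
    · have harg : (0:ℝ) ≤ (k:ℝ)*(4*ε) + -(4*ε*((m:ℝ)*(p+ε))) := by
        have h2 := mul_nonneg hε (sub_nonneg.2 h.le)
        nlinarith
      have hrw : (p*exp (4*ε))^k * (1-p)^(m-k) * (m.choose k : ℝ) * exp (-(4*ε*((m:ℝ)*(p+ε))))
          = (m.choose k : ℝ) * p^k * (1-p)^(m-k) * exp ((k:ℝ)*(4*ε) + -(4*ε*((m:ℝ)*(p+ε)))) := by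
        rw [exp_add, exp_nat_mul, mul_pow]; ring
      rw [hrw]
      exact le_mul_of_one_le_right hbase (one_le_exp harg)
    · exact mul_nonneg (mul_nonneg (mul_nonneg
        (pow_nonneg (by positivity) k) (pow_nonneg hq _)) hC) (exp_pos _).le
  refine (Finset.sum_le_sum key).trans ?_
  rw [← Finset.sum_mul, ← add_pow]
  have hb := bernoulli_mgf p (4*ε) hp0 hp1 (by positivity)
  have hxy : (0:ℝ) ≤ p * exp (4*ε) + (1-p) := add_nonneg (by positivity) hq
  have hpow : (p * exp (4*ε) + (1-p))^m ≤ exp (4*ε*p + (4*ε)^2/8)^m :=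
    pow_le_pow_left₀ hxy (by linarith [hb]) m
  calc (p * exp (4*ε) + (1-p))^m * exp (-(4*ε*((m:ℝ)*(p+ε))))
      ≤ exp (4*ε*p + (4*ε)^2/8)^m * exp (-(4*ε*((m:ℝ)*(p+ε)))) :=
        mul_le_mul_of_nonneg_right hpow (exp_pos _).le
    _ = exp (-(2 * m * ε^2)) := by
        rw [← exp_nat_mul, ← exp_add]
        congr 1
        ring

/-- Two-sided Chernoff–Hoeffding bound for the binomial distribution. -/
lemma tail_two (m : ℕ) (hm : 0 < m) (p ε : ℝ) (hp0 : 0 ≤ p) (hp1 : p ≤ 1) (hε : 0 ≤ ε) :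
    ∑ k ∈ Finset.range (m+1),
      (if ε < |p - (k:ℝ)/m| then (m.choose k : ℝ) * p^k * (1-p)^(m-k) else 0)
      ≤ 2 * exp (-(2 * m * ε^2)) := by
  have hq : (0:ℝ) ≤ 1 - p := by linarith
  have hm' : (0:ℝ) < m := by exact_mod_cast hm
  set U : ℕ → ℝ := fun k =>
    if (m:ℝ) * (p+ε) < k then (m.choose k : ℝ) * p^k * (1-p)^(m-k) else 0 with hU
  set L : ℕ → ℝ := fun k =>
    if (m:ℝ) * ((1-p)+ε) < ((m-k : ℕ) : ℝ) then (m.choose k : ℝ) * p^k * (1-p)^(m-k) else 0 with hL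
  have hsplit : ∀ k ∈ Finset.range (m+1),
      (if ε < |p - (k:ℝ)/m| then (m.choose k : ℝ) * p^k * (1-p)^(m-k) else 0) ≤ U k + L k := by
    intro k hk
    have hkm : k ≤ m := Nat.lt_succ_iff.mp (Finset.mem_range.mp hk)
    have hcast : ((m - k : ℕ) : ℝ) = (m:ℝ) - (k:ℝ) := by
      rw [Nat.cast_sub hkm]
    have hC : (0:ℝ) ≤ m.choose k := Nat.cast_nonneg _
    have hbase : (0:ℝ) ≤ (m.choose k : ℝ) * p^k * (1-p)^(m-k) :=
      mul_nonneg (mul_nonneg hC (pow_nonneg hp0 k)) (pow_nonneg hq _)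
    have hUnn : 0 ≤ U k := by rw [hU]; dsimp only; split_ifs <;> simp [hbase]
    have hLnn : 0 ≤ L k := by rw [hL]; dsimp only; split_ifs <;> simp [hbase]
    split_ifs with h
    · rcases lt_abs.mp h with h1 | h1
      · -- p - k/m > ε : lower tail
        have hcond : (m:ℝ) * ((1-p)+ε) < ((m-k : ℕ) : ℝ) := by
          rw [hcast]
          have : (k:ℝ)/m < p - ε := by linarith
          have := (div_lt_iff₀ hm').mp this
          nlinarith
        have : L k = (m.choose k : ℝ) * p^k * (1-p)^(m-k) := by
          rw [hL]; dsimp only; rw [if_pos hcond]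
        linarith [hUnn, this.ge]
      · -- k/m - p > ε : upper tail
        have hcond : (m:ℝ) * (p+ε) < k := by
          have : p + ε < (k:ℝ)/m := by linarith
          have := (lt_div_iff₀ hm').mp this
          nlinarith
        have : U k = (m.choose k : ℝ) * p^k * (1-p)^(m-k) := by
          rw [hU]; dsimp only; rw [if_pos hcond]
        linarith [hLnn, this.ge]
    · linarith [hUnn, hLnn]
  refine (Finset.sum_le_sum hsplit).trans ?_
  rw [Finset.sum_add_distrib]
  have hUle : ∑ k ∈ Finset.range (m+1), U k ≤ exp (-(2 * m * ε^2)) :=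
    tail_upper m p ε hp0 hp1 hε
  have hLle : ∑ k ∈ Finset.range (m+1), L k ≤ exp (-(2 * m * ε^2)) := by
    have hrefl := Finset.sum_range_reflect (fun j : ℕ =>
      if (m:ℝ) * ((1-p)+ε) < (j:ℝ) then (m.choose j : ℝ) * (1-p)^j * (1-(1-p))^(m-j) else 0) (m+1)
    have hcongr : ∀ k ∈ Finset.range (m+1), L k =
        (fun j : ℕ => if (m:ℝ) * ((1-p)+ε) < (j:ℝ) then
          (m.choose j : ℝ) * (1-p)^j * (1-(1-p))^(m-j) else 0) (m + 1 - 1 - k) := by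
      intro k hk
      have hkm : k ≤ m := Nat.lt_succ_iff.mp (Finset.mem_range.mp hk)
      have h1 : m + 1 - 1 - k = m - k := by omega
      have h2 : m - (m - k) = k := Nat.sub_sub_self hkm
      have h3 : m.choose (m - k) = m.choose k := Nat.choose_symm hkm
      rw [hL]; dsimp only
      rw [h1, h2, h3]
      have h4 : (1 : ℝ) - (1 - p) = p := by ring
      rw [h4]; ring
    rw [Finset.sum_congr rfl hcongr, hrefl]
    exact tail_upper m (1-p) ε hq (by linarith) hε
  linarith

open MeasureTheory ENNReal

/-- The candidate empirical FDR value given `m` discoveries of which `k` are false. -/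
noncomputable def rhatOf (m k : ℕ) : ℝ≥0∞ := if 0 < m then (k : ℝ≥0∞) / (m : ℝ≥0∞) else ⊤

/-- Classes of a sample point: `none` = not discovered, `some b` = discovered with label `b`. -/
def Cset {𝓧 : Type*} (h : 𝓧 → Bool) : Option Bool → Set (𝓧 × Bool)
  | none => {z : 𝓧 × Bool | ¬ h z.1 = true}
  | some b => {z : 𝓧 × Bool | z.2 = b ∧ h z.1 = true}

/-- The class profile determined by finsets `T ⊆ S` of indices. -/
def fST {n : ℕ} (S T : Finset (Fin n)) : Fin n → Option Bool :=
  fun i => if i ∈ T then some false else if i ∈ S then some true else none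

lemma prod_fST {n : ℕ} {M : Type*} [CommMonoid M] (S T : Finset (Fin n)) (hTS : T ⊆ S)
    (w : Option Bool → M) :
    ∏ i, w (fST S T i) =
      w (some false) ^ T.card * w (some true) ^ (S.card - T.card) * w none ^ (n - S.card) := by
  have h1 : ∀ i ∈ Finset.univ \ S, w (fST S T i) = w none := by
    intro i hi
    rw [Finset.mem_sdiff] at hi
    have hiT : i ∉ T := fun hT => hi.2 (hTS hT)
    simp [fST, hiT, hi.2]
  have h2 : ∀ i ∈ S \ T, w (fST S T i) = w (some true) := by
    intro i hi; rw [Finset.mem_sdiff] at hi; simp [fST, hi.1, hi.2]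
  have h3 : ∀ i ∈ T, w (fST S T i) = w (some false) := by
    intro i hi; simp [fST, hi]
  rw [← Finset.prod_sdiff (Finset.subset_univ S), ← Finset.prod_sdiff hTS,
     Finset.prod_congr rfl h1, Finset.prod_congr rfl h2, Finset.prod_congr rfl h3,
     Finset.prod_const, Finset.prod_const, Finset.prod_const,
     Finset.card_sdiff_of_subset (Finset.subset_univ S), Finset.card_sdiff_of_subset hTS,
     Finset.card_univ, Fintype.card_fin]
  ac_rfl

lemma edistE_ofReal {x y : ℝ} (hx : 0 ≤ x) (hy : 0 ≤ y) :
    edistE (ENNReal.ofReal x) (ENNReal.ofReal y) = ENNReal.ofReal |x - y| := by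
  unfold edistE
  have hmono : Monotone ENNReal.ofReal := fun a b hab => ENNReal.ofReal_le_ofReal hab
  rw [← ENNReal.ofReal_sub x hy, ← ENNReal.ofReal_sub y hx, ← hmono.map_max]
  congr 1
  rw [abs_sub_comm, abs_eq_max_neg, neg_sub, max_comm]

lemma inner_bound {𝓧 : Type*} [MeasurableSpace 𝓧] (P : Measure (𝓧 × Bool))
    [IsProbabilityMeasure P] (h : 𝓧 → Bool) (hmeas : Measurable h)
    (c δ : ℝ) (hc : 0 ≤ c) (hδ0 : 0 < δ) (hδ1 : δ < 1) (m : ℕ) :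
    ∑ k ∈ Finset.range (m+1), (m.choose k) •
      (if ¬ (edistE (RD P h) (rhatOf m k) ≤ pen c δ m)
        then P (Cset h (some false)) ^ k * P (Cset h (some true)) ^ (m-k) else 0)
      ≤ P {z : 𝓧 × Bool | h z.1 = true} ^ m
          * ENNReal.ofReal (δ * (2:ℝ) ^ (-c)) := by
  have hDnn : (0:ℝ) ≤ δ * (2:ℝ) ^ (-c) := by positivity
  rcases Nat.eq_zero_or_pos m with rfl | hm
  · have hpen : pen c δ 0 = ⊤ := by simp [pen]
    simp [hpen]
  have hsets : {z : 𝓧 × Bool | h z.1 = true}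
      = Cset h (some false) ∪ Cset h (some true) := by
    ext z; cases hz : z.2 <;> simp [Cset, hz]
  have hdisj : Disjoint (Cset h (some false)) (Cset h (some true)) := by
    rw [Set.disjoint_left]
    rintro z ⟨hz1, _⟩ ⟨hz2, _⟩
    rw [hz1] at hz2; exact Bool.noConfusion hz2
  have hmeas2 : MeasurableSet (Cset h (some true)) := by
    have : Cset h (some true) = Prod.snd ⁻¹' {true} ∩ (fun z : 𝓧 × Bool => h z.1) ⁻¹' {true} := by
      ext z; simp [Cset, and_comm]
    rw [this]
    exact (measurable_snd (measurableSet_singleton true)).inter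
      ((hmeas.comp measurable_fst) (measurableSet_singleton true))
  have hPadd : P {z : 𝓧 × Bool | h z.1 = true}
      = P (Cset h (some false)) + P (Cset h (some true)) := by
    rw [hsets, measure_union hdisj hmeas2]
  rcases eq_or_ne (P {z : 𝓧 × Bool | h z.1 = true}) 0 with hP0 | hP0
  · have hz : P (Cset h (some false)) + P (Cset h (some true)) = 0 := hPadd ▸ hP0
    have hp1 : P (Cset h (some false)) = 0 := (add_eq_zero.mp hz).1
    have hp2 : P (Cset h (some true)) = 0 := (add_eq_zero.mp hz).2
    refine le_trans (le_of_eq (Finset.sum_eq_zero ?_)) zero_le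
    intro k hk
    rcases Nat.eq_zero_or_pos k with rfl | hk0
    · simp [hp2, zero_pow hm.ne']
    · simp [hp1, zero_pow hk0.ne']
  -- main case : positive discovery probability
  have hfin : P {z : 𝓧 × Bool | h z.1 = true} ≠ ⊤ := measure_ne_top P _
  have hp1fin : P (Cset h (some false)) ≠ ⊤ := measure_ne_top P _
  have hp2fin : P (Cset h (some true)) ≠ ⊤ := measure_ne_top P _
  set r1 := (P (Cset h (some false))).toReal with hr1def
  set r2 := (P (Cset h (some true))).toReal with hr2def
  have hr1 : 0 ≤ r1 := ENNReal.toReal_nonneg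
  have hr2 : 0 ≤ r2 := ENNReal.toReal_nonneg
  set a := (P {z : 𝓧 × Bool | h z.1 = true}).toReal with hadef
  have ha : 0 < a := ENNReal.toReal_pos hP0 hfin
  have haeq : a = r1 + r2 := by rw [hadef, hPadd, ENNReal.toReal_add hp1fin hp2fin]
  set qr := r1 / a with hqrdef
  have hqr0 : 0 ≤ qr := div_nonneg hr1 ha.le
  have hqr1 : qr ≤ 1 := by rw [hqrdef, div_le_one ha]; linarith
  have hA : P {z : 𝓧 × Bool | h z.1 = true} = ENNReal.ofReal a :=
    (ENNReal.ofReal_toReal hfin).symm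
  have hp1eq : P (Cset h (some false)) = ENNReal.ofReal r1 :=
    (ENNReal.ofReal_toReal hp1fin).symm
  have hp2eq : P (Cset h (some true)) = ENNReal.ofReal r2 :=
    (ENNReal.ofReal_toReal hp2fin).symm
  have hRD : RD P h = ENNReal.ofReal qr := by
    rw [RD, if_pos (pos_iff_ne_zero.mpr hP0)]
    have hnum : {z : 𝓧 × Bool | z.2 = false ∧ h z.1 = true} = Cset h (some false) := rfl
    rw [hnum, hp1eq, hA, hqrdef, ENNReal.ofReal_div_of_pos ha]
  set E := c * Real.log 2 + Real.log (2 / δ) with hEdef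
  have hE : 0 < E := by
    have h1 : 0 ≤ c * Real.log 2 := mul_nonneg hc (Real.log_nonneg one_le_two)
    have h2 : 0 < Real.log (2 / δ) := Real.log_pos (by rw [lt_div_iff₀ hδ0]; linarith)
    rw [hEdef]; linarith
  have hm' : (0:ℝ) < (m:ℝ) := by exact_mod_cast hm
  set ε := Real.sqrt (E / (2 * m)) with hεdef
  have hε : 0 ≤ ε := Real.sqrt_nonneg _
  have hpen : pen c δ m = ENNReal.ofReal ε := by rw [pen, if_pos hm]
  have hBadIff : ∀ k : ℕ, (¬ (edistE (RD P h) (rhatOf m k) ≤ pen c δ m))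
      ↔ ε < |qr - (k:ℝ)/m| := by
    intro k
    have hkm : ((k:ℝ≥0∞)) / (m:ℝ≥0∞) = ENNReal.ofReal ((k:ℝ)/(m:ℝ)) := by
      rw [ENNReal.ofReal_div_of_pos hm', ENNReal.ofReal_natCast, ENNReal.ofReal_natCast]
    rw [hRD, hpen, rhatOf, if_pos hm, hkm, edistE_ofReal hqr0 (by positivity), not_le,
      ENNReal.ofReal_lt_ofReal_iff_of_nonneg hε]
  have hterm : ∀ k ∈ Finset.range (m+1), (m.choose k) •
      (if ¬ (edistE (RD P h) (rhatOf m k) ≤ pen c δ m)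
        then P (Cset h (some false)) ^ k * P (Cset h (some true)) ^ (m-k) else 0)
      = ENNReal.ofReal ((a ^ m) *
          (if ε < |qr - (k:ℝ)/m| then (m.choose k : ℝ) * qr^k * (1-qr)^(m-k) else 0)) := by
    intro k hk
    have hkm : k ≤ m := Nat.lt_succ_iff.mp (Finset.mem_range.mp hk)
    have hr1a : r1 = qr * a := by rw [hqrdef]; field_simp
    have hr2a : r2 = (1 - qr) * a := by
      have : qr * a = r1 := by rw [hqrdef]; field_simp
      nlinarith [haeq]
    have hmain : r1 ^ k * r2 ^ (m-k) = a ^ m * (qr^k * (1-qr)^(m-k)) := by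
      rw [hr1a, hr2a, mul_pow, mul_pow]
      have hpw : a ^ k * a ^ (m - k) = a ^ m := by
        rw [← pow_add]; congr 1; omega
      calc (qr ^ k * a ^ k) * ((1-qr) ^ (m-k) * a ^ (m-k))
          = (a ^ k * a ^ (m-k)) * (qr^k * (1-qr)^(m-k)) := by ring
        _ = a ^ m * (qr^k * (1-qr)^(m-k)) := by rw [hpw]
    rw [hp1eq, hp2eq, ← ENNReal.ofReal_pow hr1, ← ENNReal.ofReal_pow hr2,
      ← ENNReal.ofReal_mul (by positivity), if_congr (hBadIff k) rfl rfl, hmain]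
    rcases Classical.em (ε < |qr - (k:ℝ)/m|) with hcond | hcond
    · rw [if_pos hcond, if_pos hcond, nsmul_eq_mul, ← ENNReal.ofReal_natCast (m.choose k),
        ← ENNReal.ofReal_mul (Nat.cast_nonneg _)]
      congr 1; ring
    · rw [if_neg hcond, if_neg hcond, smul_zero, mul_zero, ENNReal.ofReal_zero]
  have hnn : ∀ k ∈ Finset.range (m+1), (0:ℝ) ≤ (a ^ m) *
      (if ε < |qr - (k:ℝ)/m| then (m.choose k : ℝ) * qr^k * (1-qr)^(m-k) else 0) := by
    intro k hk
    have h1mq : (0:ℝ) ≤ 1 - qr := by linarith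
    split_ifs with hcond
    · positivity
    · simp
  rw [Finset.sum_congr rfl hterm, ← ENNReal.ofReal_sum_of_nonneg hnn, ← Finset.mul_sum]
  -- apply the binomial tail bound
  have htail := tail_two m hm qr ε hqr0 hqr1 hε
  have hexp : 2 * Real.exp (-(2 * m * ε^2)) = δ * (2:ℝ) ^ (-c) := by
    have hsq : ε ^ 2 = E / (2 * m) := Real.sq_sqrt (by positivity)
    have harg : -(2 * (m:ℝ) * (E / (2 * m))) = -E := by field_simp
    rw [hsq, harg, hEdef, neg_add, Real.exp_add]
    have h1 : Real.exp (-(c * Real.log 2)) = (2:ℝ) ^ (-c) := by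
      rw [Real.rpow_def_of_pos two_pos]
      congr 1; ring
    have h2 : Real.exp (-Real.log (2 / δ)) = δ / 2 := by
      rw [Real.exp_neg, Real.exp_log (by positivity), inv_div]
    rw [h1, h2]; ring
  calc ENNReal.ofReal (a ^ m * ∑ k ∈ Finset.range (m+1),
        (if ε < |qr - (k:ℝ)/m| then (m.choose k : ℝ) * qr^k * (1-qr)^(m-k) else 0))
      ≤ ENNReal.ofReal (a ^ m * (δ * (2:ℝ) ^ (-c))) := by
        apply ENNReal.ofReal_le_ofReal
        have := mul_le_mul_of_nonneg_left (htail.trans_eq hexp) (pow_nonneg ha.le m)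
        exact this
    _ = P {z : 𝓧 × Bool | h z.1 = true} ^ m * ENNReal.ofReal (δ * (2:ℝ) ^ (-c)) := by
        rw [ENNReal.ofReal_mul (by positivity), hA, ENNReal.ofReal_pow ha.le]

lemma UH_bound {𝓧 : Type*} [MeasurableSpace 𝓧] (P : Measure (𝓧 × Bool))
    [IsProbabilityMeasure P] (h : 𝓧 → Bool) (hmeas : Measurable h)
    (c δ : ℝ) (hc : 0 ≤ c) (hδ0 : 0 < δ) (hδ1 : δ < 1) (n : ℕ) :
    (Measure.pi fun _ : Fin n => P)
      (⋃ S : Finset (Fin n), ⋃ T ∈ S.powerset.filter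
          (fun T => ¬ (edistE (RD P h) (rhatOf S.card T.card) ≤ pen c δ S.card)),
        Set.univ.pi fun i => Cset h (fST S T i))
      ≤ ENNReal.ofReal δ * (2:ℝ≥0∞) ^ (-(c:ℝ)) := by
  have hmeasset : MeasurableSet {z : 𝓧 × Bool | h z.1 = true} :=
    (hmeas.comp measurable_fst) (measurableSet_singleton true)
  set μ := Measure.pi fun _ : Fin n => P with hμdef
  set D := ENNReal.ofReal (δ * (2:ℝ) ^ (-c)) with hDdef
  set X := P {z : 𝓧 × Bool | h z.1 = true} with hXdef
  set Y := P (Cset h none) with hYdef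
  have step1 : μ (⋃ S : Finset (Fin n), ⋃ T ∈ S.powerset.filter
          (fun T => ¬ (edistE (RD P h) (rhatOf S.card T.card) ≤ pen c δ S.card)),
        Set.univ.pi fun i => Cset h (fST S T i))
      ≤ ∑ S : Finset (Fin n), ∑ T ∈ S.powerset.filter
          (fun T => ¬ (edistE (RD P h) (rhatOf S.card T.card) ≤ pen c δ S.card)),
        μ (Set.univ.pi fun i => Cset h (fST S T i)) :=
    le_trans (measure_iUnion_fintype_le μ _)
      (Finset.sum_le_sum fun S _ => measure_biUnion_finset_le _ _)
  have step2 : ∀ S : Finset (Fin n),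
      ∑ T ∈ S.powerset.filter
          (fun T => ¬ (edistE (RD P h) (rhatOf S.card T.card) ≤ pen c δ S.card)),
        μ (Set.univ.pi fun i => Cset h (fST S T i))
      ≤ X ^ S.card * D * Y ^ (n - S.card) := by
    intro S
    rw [Finset.sum_filter]
    have hcongr : ∀ T ∈ S.powerset,
        (if ¬ (edistE (RD P h) (rhatOf S.card T.card) ≤ pen c δ S.card) then
          μ (Set.univ.pi fun i => Cset h (fST S T i)) else 0)
        = (fun k => (if ¬ (edistE (RD P h) (rhatOf S.card k) ≤ pen c δ S.card)
            then P (Cset h (some false)) ^ k * P (Cset h (some true)) ^ (S.card - k) else 0)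
            * Y ^ (n - S.card)) T.card := by
      intro T hT
      have hTS : T ⊆ S := Finset.mem_powerset.mp hT
      have hμA : μ (Set.univ.pi fun i => Cset h (fST S T i))
          = P (Cset h (some false)) ^ T.card * P (Cset h (some true)) ^ (S.card - T.card)
            * Y ^ (n - S.card) := by
        rw [hμdef, Measure.pi_pi]
        exact prod_fST S T hTS (fun v => P (Cset h v))
      dsimp only
      rw [hμA, ← ite_zero_mul]
    rw [Finset.sum_congr rfl hcongr]
    rw [Finset.sum_powerset_apply_card (fun k =>
      (if ¬ (edistE (RD P h) (rhatOf S.card k) ≤ pen c δ S.card)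
        then P (Cset h (some false)) ^ k * P (Cset h (some true)) ^ (S.card - k) else 0)
        * Y ^ (n - S.card))]
    have hsmul : ∀ k ∈ Finset.range (S.card + 1),
        (S.card.choose k) • ((if ¬ (edistE (RD P h) (rhatOf S.card k) ≤ pen c δ S.card)
            then P (Cset h (some false)) ^ k * P (Cset h (some true)) ^ (S.card - k) else 0)
            * Y ^ (n - S.card))
        = ((S.card.choose k) • (if ¬ (edistE (RD P h) (rhatOf S.card k) ≤ pen c δ S.card)
            then P (Cset h (some false)) ^ k * P (Cset h (some true)) ^ (S.card - k) else 0))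
            * Y ^ (n - S.card) := fun k _ => (smul_mul_assoc _ _ _).symm
    rw [Finset.sum_congr rfl hsmul, ← Finset.sum_mul]
    exact mul_le_mul_left
      (inner_bound P h hmeas c δ hc hδ0 hδ1 S.card) _
  refine step1.trans ((Finset.sum_le_sum fun S _ => step2 S).trans ?_)
  -- sum over all S, grouped by cardinality
  have huniv : (Finset.univ : Finset (Finset (Fin n)))
      = (Finset.univ : Finset (Fin n)).powerset := Finset.powerset_univ.symm
  rw [huniv, Finset.sum_powerset_apply_card (fun m => X ^ m * D * Y ^ (n - m))]
  have hcard : ((Finset.univ : Finset (Fin n)).card) = n := by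
    rw [Finset.card_univ, Fintype.card_fin]
  rw [hcard]
  have hterm : ∀ m ∈ Finset.range (n + 1),
      (n.choose m) • (X ^ m * D * Y ^ (n - m))
        = (X ^ m * Y ^ (n - m) * (n.choose m)) * D := by
    intro m _
    rw [nsmul_eq_mul]
    ring
  rw [Finset.sum_congr rfl hterm, ← Finset.sum_mul, ← add_pow]
  have hXY : X + Y = 1 := by
    rw [hXdef, hYdef]
    have : Cset h none = {z : 𝓧 × Bool | h z.1 = true}ᶜ := rfl
    rw [this]
    rw [measure_add_measure_compl hmeasset, measure_univ]
  rw [hXY, one_pow, one_mul, hDdef,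
    ENNReal.ofReal_mul hδ0.le, ← ENNReal.ofReal_rpow_of_pos two_pos, ENNReal.ofReal_ofNat]

/-- **Theorem 1, FDR part.** For a countable class `H` of classifiers with codelengths `cl`
satisfying the Kraft inequality, with probability at least `1 - δ` over the draw of an i.i.d.
training sample of size `n` from `P`, every `h ∈ H` satisfies
`|R_D(h) - R̂_D(h)| ≤ φ_D(h, δ)`.  This holds for every `n ≥ 1`, every `0 < δ < 1` and
every underlying distribution `P`. -/
theorem fdr_uniform_deviation_bound
    {𝓧 : Type*} [MeasurableSpace 𝓧] (P : Measure (𝓧 × Bool)) [IsProbabilityMeasure P]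
    (H : Set (𝓧 → Bool)) (hHcount : H.Countable) (hHmeas : ∀ h ∈ H, Measurable h)
    (cl : (𝓧 → Bool) → ℝ)
    (hKraft : ∑' h : H, (2 : ℝ≥0∞) ^ (-(cl h.1)) ≤ 1)
    (n : ℕ) (hn : 1 ≤ n) (δ : ℝ) (hδ0 : 0 < δ) (hδ1 : δ < 1) :
    ENNReal.ofReal (1 - δ) ≤
      (Measure.pi fun _ : Fin n => P)
        {ω | ∀ h ∈ H, edistE (RD P h) (RhatD h ω) ≤ pen (cl h) δ (nD h ω)} := by
  set μ := Measure.pi fun _ : Fin n => P with hμdef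
  have hcl : ∀ h ∈ H, 0 ≤ cl h := by
    intro h hh
    by_contra hneg
    push_neg at hneg
    have h1 : (1:ℝ≥0∞) < 2 ^ (-(cl h)) := by
      calc (1:ℝ≥0∞) = 2 ^ (0:ℝ) := by rw [ENNReal.rpow_zero]
        _ < 2 ^ (-(cl h)) :=
          ENNReal.rpow_lt_rpow_of_exponent_lt one_lt_two ENNReal.ofNat_ne_top (by linarith)
    have h2 : (2:ℝ≥0∞) ^ (-(cl h)) ≤ 1 :=
      le_trans (ENNReal.le_tsum (⟨h, hh⟩ : H)) hKraft
    exact absurd h2 (not_le.mpr h1)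
  set U : Set (Fin n → 𝓧 × Bool) := ⋃ h ∈ H,
    ⋃ S : Finset (Fin n), ⋃ T ∈ S.powerset.filter
        (fun T => ¬ (edistE (RD P h) (rhatOf S.card T.card) ≤ pen (cl h) δ S.card)),
      Set.univ.pi fun i => Cset h (fST S T i) with hUdef
  have hUb : μ U ≤ ENNReal.ofReal δ := by
    refine le_trans (measure_biUnion_le μ hHcount _) ?_
    have hle : ∀ h : H, μ (⋃ S : Finset (Fin n), ⋃ T ∈ S.powerset.filter
          (fun T => ¬ (edistE (RD P h.1) (rhatOf S.card T.card) ≤ pen (cl h.1) δ S.card)),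
        Set.univ.pi fun i => Cset h.1 (fST S T i)) ≤ ENNReal.ofReal δ * 2 ^ (-(cl h.1)) :=
      fun h => UH_bound P h.1 (hHmeas h.1 h.2) (cl h.1) δ (hcl h.1 h.2) hδ0 hδ1 n
    refine le_trans (ENNReal.tsum_le_tsum hle) ?_
    rw [ENNReal.tsum_mul_left]
    calc ENNReal.ofReal δ * ∑' h : H, (2:ℝ≥0∞) ^ (-(cl h.1))
        ≤ ENNReal.ofReal δ * 1 := mul_le_mul_right hKraft _
      _ = ENNReal.ofReal δ := mul_one _
  have hsub : Uᶜ ⊆ {ω | ∀ h ∈ H, edistE (RD P h) (RhatD h ω) ≤ pen (cl h) δ (nD h ω)} := by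
    intro ω hω h hh
    by_contra hbad
    apply hω
    refine Set.mem_iUnion₂.2 ⟨h, hh, ?_⟩
    set S := Finset.univ.filter (fun i => h (ω i).1 = true) with hSdef
    set T := Finset.univ.filter (fun i => (ω i).2 = false ∧ h (ω i).1 = true) with hTdef
    have hTS : T ⊆ S := by
      intro i hi
      rw [hTdef, Finset.mem_filter] at hi
      rw [hSdef, Finset.mem_filter]
      exact ⟨hi.1, hi.2.2⟩
    have hnd : nD h ω = S.card := rfl
    have hrh : RhatD h ω = rhatOf S.card T.card := rfl
    have hpi : ω ∈ Set.univ.pi fun i => Cset h (fST S T i) := by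
      refine Set.mem_univ_pi.2 fun i => ?_
      by_cases hiT : i ∈ T
      · have hmem := (Finset.mem_filter.mp hiT).2
        simp only [fST, if_pos hiT]
        exact hmem
      · by_cases hiS : i ∈ S
        · have hhi : h (ω i).1 = true := (Finset.mem_filter.mp hiS).2
          have hy : (ω i).2 = true := by
            by_contra hyb
            have hfalse : (ω i).2 = false := by
              cases hb : (ω i).2
              · rfl
              · exact absurd hb hyb
            exact hiT (Finset.mem_filter.mpr ⟨Finset.mem_univ i, ⟨hfalse, hhi⟩⟩)
          simp only [fST, if_neg hiT, if_pos hiS]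
          exact ⟨hy, hhi⟩
        · simp only [fST, if_neg hiT, if_neg hiS]
          intro hhi
          exact hiS (Finset.mem_filter.mpr ⟨Finset.mem_univ i, hhi⟩)
    refine Set.mem_iUnion.2 ⟨S, Set.mem_iUnion₂.2 ⟨T, ?_, hpi⟩⟩
    rw [Finset.mem_filter]
    refine ⟨Finset.mem_powerset.2 hTS, ?_⟩
    rw [hnd, hrh] at hbad
    exact hbad
  have huniv1 : (1:ℝ≥0∞) ≤ μ U + μ Uᶜ := by
    have hle := measure_union_le (μ := μ) U Uᶜ
    rw [Set.union_compl_self, measure_univ] at hle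
    exact hle
  calc ENNReal.ofReal (1 - δ)
      ≤ 1 - ENNReal.ofReal δ := by
        refine ENNReal.le_sub_of_add_le_right ENNReal.ofReal_ne_top ?_
        rw [← ENNReal.ofReal_add (by linarith) hδ0.le, sub_add_cancel, ENNReal.ofReal_one]
    _ ≤ 1 - μ U := tsub_le_tsub_left hUb 1
    _ ≤ μ Uᶜ := tsub_le_iff_left.2 huniv1
    _ ≤ μ {ω | ∀ h ∈ H, edistE (RD P h) (RhatD h ω) ≤ pen (cl h) δ (nD h ω)} :=
        measure_mono hsub
end

section
/- With probability at least 1 − δ over the draw of the i.i.d. training sample Z^n, every classifier h in the countable class ℋ satisfies |R_ND(h) − R̂_ND(h)| ≤ φ_ND(h, δ). This holds for every n ≥ 1, every 0 < δ < 1, and every underlying probability distribution P on 𝒳 × {0,1}. -/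
open MeasureTheory ENNReal

/-- The false nondiscovery rate `R_ND(h) = P(Y = 1 | h(X) = 0)`, equal to `∞` when
`P(h(X) = 0) = 0`. -/
noncomputable def RND {𝓧 : Type*} [MeasurableSpace 𝓧] (P : Measure (𝓧 × Bool))
    (h : 𝓧 → Bool) : ℝ≥0∞ :=
  if 0 < P {z : 𝓧 × Bool | h z.1 = false} then
    P {z : 𝓧 × Bool | z.2 = true ∧ h z.1 = false} / P {z : 𝓧 × Bool | h z.1 = false}
  else ⊤

/-- The empirical number of nondiscoveries `n_ND(h, Zⁿ)`. -/
def nND {𝓧 : Type*} {n : ℕ} (h : 𝓧 → Bool) (ω : Fin n → 𝓧 × Bool) : ℕ :=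
  (Finset.univ.filter fun i => h (ω i).1 = false).card

/-- The empirical false nondiscovery rate `R̂_ND(h)`, equal to `∞` when `n_ND(h, Zⁿ) = 0`. -/
noncomputable def RhatND {𝓧 : Type*} {n : ℕ} (h : 𝓧 → Bool) (ω : Fin n → 𝓧 × Bool) : ℝ≥0∞ :=
  if 0 < nND h ω then
    ((Finset.univ.filter fun i => (ω i).2 = true ∧ h (ω i).1 = false).card : ℝ≥0∞)
      / (nND h ω : ℝ≥0∞)
  else ⊤

open Real Finset in
lemma mgf_log_bound' {p q : ℝ} (hp0 : 0 ≤ p) (hq0 : 0 ≤ q) (hpq : p + q = 1) (x : ℝ) :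
    Real.log (p * Real.exp x + q) - p * x ≤ x ^ 2 / 8 := by
  have hD : ∀ y : ℝ, 0 < p * Real.exp y + q := by
    intro y
    rcases eq_or_lt_of_le hp0 with h | h
    · have : q = 1 := by linarith
      rw [← h, this]; norm_num
    · have := Real.exp_pos y
      nlinarith
  have hDd : ∀ y : ℝ, HasDerivAt (fun z => p * Real.exp z + q) (p * Real.exp y) y := by
    intro y
    simpa using ((Real.hasDerivAt_exp y).const_mul p).add_const q
  set g : ℝ → ℝ := fun y => p * Real.exp y / (p * Real.exp y + q) - p with hgdef
  have hfd : ∀ y : ℝ, HasDerivAt (fun z => Real.log (p * Real.exp z + q) - p * z) (g y) y := by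
    intro y
    have h1 : HasDerivAt (fun z => Real.log (p * Real.exp z + q))
        (p * Real.exp y / (p * Real.exp y + q)) y := (hDd y).log (hD y).ne'
    have h2 : HasDerivAt (fun z : ℝ => p * z) p y := by
      simpa using (hasDerivAt_id y).const_mul p
    exact h1.sub h2
  have hgd : ∀ y : ℝ, HasDerivAt g
      (p * Real.exp y * q / (p * Real.exp y + q) ^ 2) y := by
    intro y
    have h1 : HasDerivAt (fun z => p * Real.exp z / (p * Real.exp z + q))
        ((p * Real.exp y * (p * Real.exp y + q) - p * Real.exp y * (p * Real.exp y)) /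
          (p * Real.exp y + q) ^ 2) y :=
      ((Real.hasDerivAt_exp y).const_mul p).div (hDd y) (hD y).ne'
    have h2 := h1.sub_const p
    have h3 : (p * Real.exp y * (p * Real.exp y + q) - p * Real.exp y * (p * Real.exp y)) /
        (p * Real.exp y + q) ^ 2 = p * Real.exp y * q / (p * Real.exp y + q) ^ 2 := by
      ring_nf
    exact h3 ▸ h2
  have hg14 : ∀ y : ℝ, p * Real.exp y * q / (p * Real.exp y + q) ^ 2 ≤ 1 / 4 := by
    intro y
    rw [div_le_iff₀ (pow_pos (hD y) 2)]
    nlinarith [sq_nonneg (p * Real.exp y - q)]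
  have hφd : ∀ y : ℝ, HasDerivAt (fun z => z / 4 - g z)
      (1 / 4 - p * Real.exp y * q / (p * Real.exp y + q) ^ 2) y := by
    intro y
    have h1 : HasDerivAt (fun z : ℝ => z / 4) (1 / 4) y := by
      simpa using (hasDerivAt_id y).div_const 4
    exact h1.sub (hgd y)
  have hφmono : Monotone (fun y => y / 4 - g y) := by
    apply monotone_of_deriv_nonneg (fun y => (hφd y).differentiableAt)
    intro y
    rw [(hφd y).deriv]
    have := hg14 y
    linarith
  have hg0 : g 0 = 0 := by
    simp [hgdef, Real.exp_zero, hpq]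
  have hgle : ∀ y : ℝ, 0 ≤ y → g y ≤ y / 4 := by
    intro y hy
    have h := hφmono hy
    simp only [hg0, zero_div, sub_zero] at h
    linarith [h]
  have hgge : ∀ y : ℝ, y ≤ 0 → y / 4 ≤ g y := by
    intro y hy
    have h := hφmono hy
    simp only [hg0, zero_div, sub_zero] at h
    linarith [h]
  set ψ : ℝ → ℝ := fun y => y ^ 2 / 8 - (Real.log (p * Real.exp y + q) - p * y) with hψdef
  have hψd : ∀ y : ℝ, HasDerivAt ψ (y / 4 - g y) y := by
    intro y
    have h1 : HasDerivAt (fun z : ℝ => z ^ 2 / 8) (y / 4) y := by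
      have := (hasDerivAt_pow 2 y).div_const 8
      exact this.congr_deriv (by push_cast; ring)
    exact h1.sub (hfd y)
  have hψdiff : Differentiable ℝ ψ := fun y => (hψd y).differentiableAt
  have hψ0 : ψ 0 = 0 := by
    simp [hψdef, Real.exp_zero, hpq]
  have key : 0 ≤ ψ x := by
    rcases le_total 0 x with hy | hy
    · have hmono : MonotoneOn ψ (Set.Ici (0 : ℝ)) := by
        apply monotoneOn_of_deriv_nonneg (convex_Ici 0) hψdiff.continuous.continuousOn
          hψdiff.differentiableOn
        intro z hz
        rw [interior_Ici] at hz
        rw [(hψd z).deriv]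
        have := hgle z (le_of_lt hz)
        linarith
      have := hmono Set.self_mem_Ici (Set.mem_Ici.mpr hy) hy
      rw [hψ0] at this; exact this
    · have hanti : AntitoneOn ψ (Set.Iic (0 : ℝ)) := by
        apply antitoneOn_of_deriv_nonpos (convex_Iic 0) hψdiff.continuous.continuousOn
          hψdiff.differentiableOn
        intro z hz
        rw [interior_Iic] at hz
        rw [(hψd z).deriv]
        have := hgge z (le_of_lt hz)
        linarith
      have := hanti (Set.mem_Iic.mpr hy) Set.self_mem_Iic hy
      rw [hψ0] at this; exact this
  simp only [hψdef] at key
  linarith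

lemma chernoff_upper (m : ℕ) {p q t : ℝ} (hp0 : 0 ≤ p) (hq0 : 0 ≤ q) (hpq : p + q = 1)
    (ht : 0 ≤ t) :
    ∑ k ∈ Finset.range (m + 1),
      (if (m : ℝ) * (p + t) ≤ k then (m.choose k : ℝ) * (p ^ k * q ^ (m - k)) else 0)
      ≤ Real.exp (-(2 * m * t ^ 2)) := by
  have hD : 0 < p * Real.exp (4 * t) + q := by
    rcases eq_or_lt_of_le hp0 with h | h
    · have hq1 : q = 1 := by linarith
      rw [← h, hq1]; norm_num
    · have := Real.exp_pos (4 * t)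
      nlinarith
  calc ∑ k ∈ Finset.range (m + 1),
      (if (m : ℝ) * (p + t) ≤ k then (m.choose k : ℝ) * (p ^ k * q ^ (m - k)) else 0)
      ≤ ∑ k ∈ Finset.range (m + 1),
        (m.choose k : ℝ) * (p ^ k * q ^ (m - k)) * Real.exp (4 * t * (k - m * (p + t))) := by
        apply Finset.sum_le_sum
        intro k _
        have hnn : (0 : ℝ) ≤ (m.choose k : ℝ) * (p ^ k * q ^ (m - k)) := by positivity
        split_ifs with hc
        · nth_rewrite 1 [← mul_one ((m.choose k : ℝ) * (p ^ k * q ^ (m - k)))]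
          apply mul_le_mul_of_nonneg_left _ hnn
          apply Real.one_le_exp
          have h1 : (0:ℝ) ≤ (k : ℝ) - m * (p + t) := by linarith
          positivity
        · positivity
    _ = Real.exp (-(4 * t * (m * (p + t)))) * (p * Real.exp (4 * t) + q) ^ m := by
        rw [add_pow, Finset.mul_sum]
        apply Finset.sum_congr rfl
        intro k _
        have he : Real.exp (4 * t * ((k : ℝ) - m * (p + t)))
            = Real.exp ((k : ℝ) * (4 * t)) * Real.exp (-(4 * t * (m * (p + t)))) := by
          rw [← Real.exp_add]; ring_nf
        rw [he, mul_pow, ← Real.exp_nat_mul]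
        ring
    _ ≤ Real.exp (-(2 * m * t ^ 2)) := by
        have hmgf : p * Real.exp (4 * t) + q ≤ Real.exp (p * (4 * t) + 2 * t ^ 2) := by
          have h := mgf_log_bound' hp0 hq0 hpq (4 * t)
          have h2 : Real.log (p * Real.exp (4 * t) + q) ≤ p * (4 * t) + 2 * t ^ 2 := by
            nlinarith
          calc p * Real.exp (4 * t) + q = Real.exp (Real.log (p * Real.exp (4 * t) + q)) :=
                (Real.exp_log hD).symm
            _ ≤ _ := Real.exp_le_exp.mpr h2
        calc Real.exp (-(4 * t * (m * (p + t)))) * (p * Real.exp (4 * t) + q) ^ m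
            ≤ Real.exp (-(4 * t * (m * (p + t)))) * (Real.exp (p * (4 * t) + 2 * t ^ 2)) ^ m := by
              apply mul_le_mul_of_nonneg_left _ (Real.exp_pos _).le
              exact pow_le_pow_left₀ hD.le hmgf m
          _ = Real.exp (-(4 * t * (m * (p + t))) + m * (p * (4 * t) + 2 * t ^ 2)) := by
              rw [← Real.exp_nat_mul, ← Real.exp_add]
          _ ≤ Real.exp (-(2 * m * t ^ 2)) := by
              apply Real.exp_le_exp.mpr
              nlinarith [sq_nonneg t, Nat.cast_nonneg (α := ℝ) m]

lemma binom_two_sided (m : ℕ) {p q t : ℝ} (hp0 : 0 ≤ p) (hq0 : 0 ≤ q) (hpq : p + q = 1)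
    (ht : 0 ≤ t) :
    ∑ k ∈ Finset.range (m + 1),
      (if (m : ℝ) * t ≤ |(k : ℝ) - m * p| then (m.choose k : ℝ) * (p ^ k * q ^ (m - k)) else 0)
      ≤ 2 * Real.exp (-(2 * m * t ^ 2)) := by
  have hmq : (m : ℝ) * q = m - m * p := by
    have : q = 1 - p := by linarith
    rw [this]; ring
  have key : ∀ k ∈ Finset.range (m + 1),
      (if (m : ℝ) * t ≤ |(k : ℝ) - m * p| then (m.choose k : ℝ) * (p ^ k * q ^ (m - k)) else 0)
      ≤ (if (m : ℝ) * (p + t) ≤ k then (m.choose k : ℝ) * (p ^ k * q ^ (m - k)) else 0)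
        + (if (m : ℝ) * (q + t) ≤ ((m - k : ℕ) : ℝ) then (m.choose k : ℝ) * (p ^ k * q ^ (m - k))
            else 0) := by
    intro k hk
    have hkm : k ≤ m := by rw [Finset.mem_range] at hk; omega
    have hnn : (0 : ℝ) ≤ (m.choose k : ℝ) * (p ^ k * q ^ (m - k)) := by positivity
    have hnn1 : (0:ℝ) ≤ if (m : ℝ) * (p + t) ≤ k then (m.choose k : ℝ) * (p ^ k * q ^ (m - k))
        else 0 := by split_ifs <;> simp [hnn]
    have hnn2 : (0:ℝ) ≤ if (m : ℝ) * (q + t) ≤ ((m - k : ℕ) : ℝ) then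
        (m.choose k : ℝ) * (p ^ k * q ^ (m - k)) else 0 := by split_ifs <;> simp [hnn]
    by_cases h1 : (m : ℝ) * t ≤ |(k : ℝ) - m * p|
    · rw [if_pos h1]
      rcases le_abs.mp h1 with hA | hB
      · have hc : (m : ℝ) * (p + t) ≤ k := by linarith
        rw [if_pos hc] at hnn1 ⊢
        linarith
      · have hc : (m : ℝ) * (q + t) ≤ ((m - k : ℕ) : ℝ) := by
          rw [Nat.cast_sub hkm]
          nlinarith [hmq]
        rw [if_pos hc] at hnn2 ⊢
        linarith
    · rw [if_neg h1]
      linarith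
  calc ∑ k ∈ Finset.range (m + 1),
      (if (m : ℝ) * t ≤ |(k : ℝ) - m * p| then (m.choose k : ℝ) * (p ^ k * q ^ (m - k)) else 0)
      ≤ ∑ k ∈ Finset.range (m + 1),
        ((if (m : ℝ) * (p + t) ≤ k then (m.choose k : ℝ) * (p ^ k * q ^ (m - k)) else 0)
        + (if (m : ℝ) * (q + t) ≤ ((m - k : ℕ) : ℝ) then (m.choose k : ℝ) * (p ^ k * q ^ (m - k))
            else 0)) := Finset.sum_le_sum key
    _ = (∑ k ∈ Finset.range (m + 1),
          (if (m : ℝ) * (p + t) ≤ k then (m.choose k : ℝ) * (p ^ k * q ^ (m - k)) else 0))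
        + ∑ k ∈ Finset.range (m + 1),
          (if (m : ℝ) * (q + t) ≤ ((m - k : ℕ) : ℝ) then (m.choose k : ℝ) * (p ^ k * q ^ (m - k))
            else 0) := Finset.sum_add_distrib
    _ ≤ Real.exp (-(2 * m * t ^ 2)) + Real.exp (-(2 * m * t ^ 2)) := by
        apply add_le_add (chernoff_upper m hp0 hq0 hpq ht)
        have hrefl : ∑ k ∈ Finset.range (m + 1),
            (if (m : ℝ) * (q + t) ≤ ((m - k : ℕ) : ℝ) then
              (m.choose k : ℝ) * (p ^ k * q ^ (m - k)) else 0)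
            = ∑ k ∈ Finset.range (m + 1),
            (if (m : ℝ) * (q + t) ≤ (k : ℝ) then (m.choose k : ℝ) * (q ^ k * p ^ (m - k))
              else 0) := by
          rw [← Finset.sum_range_reflect]
          apply Finset.sum_congr rfl
          intro k hk
          have hkm : k ≤ m := by rw [Finset.mem_range] at hk; omega
          have h1 : m + 1 - 1 - k = m - k := by omega
          have h2 : m - (m - k) = k := by omega
          rw [h1, h2, Nat.choose_symm hkm]
          ring_nf
        rw [hrefl]
        exact chernoff_upper m hq0 hp0 (by linarith) ht
    _ = 2 * Real.exp (-(2 * m * t ^ 2)) := by ring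

lemma edistE_eq {x y : ℝ≥0∞} (hx : x ≠ ⊤) (hy : y ≠ ⊤) :
    edistE x y = ENNReal.ofReal |x.toReal - y.toReal| := by
  have hX : (0:ℝ) ≤ x.toReal := ENNReal.toReal_nonneg
  have hY : (0:ℝ) ≤ y.toReal := ENNReal.toReal_nonneg
  unfold edistE
  nth_rewrite 1 [← ENNReal.ofReal_toReal hx, ← ENNReal.ofReal_toReal hy]
  nth_rewrite 2 [← ENNReal.ofReal_toReal hx, ← ENNReal.ofReal_toReal hy]
  rw [← ENNReal.ofReal_sub _ hY, ← ENNReal.ofReal_sub _ hX]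
  rcases le_total x.toReal y.toReal with h | h
  · rw [abs_of_nonpos (by linarith)]
    rw [ENNReal.ofReal_of_nonpos (by linarith)]
    simp
  · rw [abs_of_nonneg (by linarith)]
    have : ENNReal.ofReal (y.toReal - x.toReal) = 0 := ENNReal.ofReal_of_nonpos (by linarith)
    rw [this]
    simp

lemma prod_ite_mem_comm {M : Type*} [CommMonoid M] {n : ℕ} (s t : Finset (Fin n)) (hts : t ⊆ s)
    (x y z : M) :
    (∏ i : Fin n, (if i ∈ t then x else if i ∈ s then y else z))
      = x ^ t.card * y ^ (s.card - t.card) * z ^ (n - s.card) := by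
  rw [← Finset.prod_sdiff (Finset.subset_univ s)]
  have h1 : (∏ i ∈ Finset.univ \ s, (if i ∈ t then x else if i ∈ s then y else z))
      = z ^ (n - s.card) := by
    rw [Finset.prod_congr rfl (fun i hi => ?_), Finset.prod_const]
    · congr 1
      rw [Finset.card_sdiff_of_subset (Finset.subset_univ s)]
      simp
    · rcases Finset.mem_sdiff.mp hi with ⟨_, his⟩
      rw [if_neg (fun hit => his (hts hit)), if_neg his]
  have h2 : (∏ i ∈ s, (if i ∈ t then x else if i ∈ s then y else z))
      = x ^ t.card * y ^ (s.card - t.card) := by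
    rw [← Finset.prod_sdiff hts]
    have h3 : (∏ i ∈ s \ t, (if i ∈ t then x else if i ∈ s then y else z))
        = y ^ (s.card - t.card) := by
      rw [Finset.prod_congr rfl (fun i hi => ?_), Finset.prod_const]
      · rw [Finset.card_sdiff_of_subset hts]
      · rcases Finset.mem_sdiff.mp hi with ⟨his, hit⟩
        rw [if_neg hit, if_pos his]
    have h4 : (∏ i ∈ t, (if i ∈ t then x else if i ∈ s then y else z)) = x ^ t.card := by
      rw [Finset.prod_congr rfl (fun i hi => if_pos hi), Finset.prod_const]
    rw [h3, h4, mul_comm]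
  rw [h1, h2, mul_comm]

/-- Bad event predicate on the pattern counts. -/
def BadP (R : ℝ≥0∞) (c δ : ℝ) (m k : ℕ) : Prop :=
  ¬ edistE R (if 0 < m then (k : ℝ≥0∞) / (m : ℝ≥0∞) else (⊤ : ℝ≥0∞)) ≤ pen c δ m

set_option maxHeartbeats 2000000 in
lemma per_h_bound {𝓧 : Type*} [MeasurableSpace 𝓧] (P : Measure (𝓧 × Bool))
    [IsProbabilityMeasure P] (h : 𝓧 → Bool) (hmeas : Measurable h) (n : ℕ) (c δ : ℝ)
    (hc : 0 ≤ c) (hδ0 : 0 < δ) (hδ1 : δ < 1) :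
    ∃ B : Set (Fin n → 𝓧 × Bool), MeasurableSet B ∧
      {ω : Fin n → 𝓧 × Bool | ¬ edistE (RND P h) (RhatND h ω) ≤ pen c δ (nND h ω)} ⊆ B ∧
      (Measure.pi fun _ : Fin n => P) B ≤ ENNReal.ofReal δ * ENNReal.ofReal ((2:ℝ) ^ (-c)) := by
  classical
  set μ := Measure.pi fun _ : Fin n => P with hμdef
  -- basic sets
  set A1 : Set (𝓧 × Bool) := {z | z.2 = true ∧ h z.1 = false} with hA1def
  set A0 : Set (𝓧 × Bool) := {z | z.2 = false ∧ h z.1 = false} with hA0def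
  set Aq : Set (𝓧 × Bool) := {z | h z.1 = true} with hAqdef
  set Aa : Set (𝓧 × Bool) := {z | h z.1 = false} with hAadef
  have hmAa : MeasurableSet Aa := (hmeas.comp measurable_fst) (measurableSet_singleton false)
  have hmAq : MeasurableSet Aq := (hmeas.comp measurable_fst) (measurableSet_singleton true)
  have hmsnd : MeasurableSet {z : 𝓧 × Bool | z.2 = true} :=
    measurable_snd (measurableSet_singleton true)
  have hmsnd' : MeasurableSet {z : 𝓧 × Bool | z.2 = false} :=
    measurable_snd (measurableSet_singleton false)
  have hmA1 : MeasurableSet A1 := hmsnd.inter hmAa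
  have hmA0 : MeasurableSet A0 := hmsnd'.inter hmAa
  -- cells
  set Asets : Finset (Fin n) → Finset (Fin n) → Fin n → Set (𝓧 × Bool) :=
    fun s t i => if i ∈ t then A1 else if i ∈ s then A0 else Aq with hAsets
  set cell : Finset (Fin n) → Finset (Fin n) → Set (Fin n → 𝓧 × Bool) :=
    fun s t => Set.pi Set.univ (Asets s t) with hcelldef
  have hmcell : ∀ s t, MeasurableSet (cell s t) := by
    intro s t
    apply MeasurableSet.pi (Set.to_countable _)
    intro i _
    simp only [hAsets]
    split_ifs
    exacts [hmA1, hmA0, hmAq]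
  set F : Finset (Finset (Fin n) × Finset (Fin n)) :=
    (Finset.univ.powerset ×ˢ Finset.univ.powerset).filter
      (fun st => st.2 ⊆ st.1 ∧ BadP (RND P h) c δ st.1.card st.2.card) with hFdef
  refine ⟨⋃ st ∈ F, cell st.1 st.2, ?_, ?_, ?_⟩
  · exact MeasurableSet.biUnion F.countable_toSet (fun st _ => hmcell st.1 st.2)
  · -- inclusion
    intro ω hω
    simp only [Set.mem_setOf_eq] at hω
    set s : Finset (Fin n) := Finset.univ.filter (fun i => h (ω i).1 = false) with hsdef
    set t : Finset (Fin n) := Finset.univ.filter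
      (fun i => (ω i).2 = true ∧ h (ω i).1 = false) with htdef
    have hts : t ⊆ s := by
      intro i hi
      simp only [hsdef, htdef, Finset.mem_filter, Finset.mem_univ, true_and] at hi ⊢
      exact hi.2
    have hnnd : nND h ω = s.card := rfl
    have hbad : BadP (RND P h) c δ s.card t.card := by
      unfold BadP
      rw [← hnnd]
      exact fun hle => hω (by rwa [show RhatND h ω =
        (if 0 < nND h ω then ((t.card : ℝ≥0∞) / (nND h ω : ℝ≥0∞)) else ⊤) from rfl])
    have hmemF : (s, t) ∈ F := by
      simp only [hFdef, Finset.mem_filter, Finset.mem_product, Finset.mem_powerset]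
      exact ⟨⟨Finset.subset_univ s, Finset.subset_univ t⟩, hts, hbad⟩
    refine Set.mem_biUnion hmemF ?_
    intro i _
    simp only [hAsets]
    by_cases hit : i ∈ t
    · rw [if_pos hit]
      exact (Finset.mem_filter.mp hit).2
    · by_cases his : i ∈ s
      · rw [if_neg hit, if_pos his]
        have h2 : h (ω i).1 = false := (Finset.mem_filter.mp his).2
        have h3 : ¬ ((ω i).2 = true ∧ h (ω i).1 = false) := by
          intro hcon
          exact hit (Finset.mem_filter.mpr ⟨Finset.mem_univ i, hcon⟩)
        constructor
        · by_contra hcon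
          simp only [Bool.not_eq_false] at hcon
          exact h3 ⟨hcon, h2⟩
        · exact h2
      · rw [if_neg hit, if_neg his]
        have h2 : ¬ h (ω i).1 = false := fun hcon =>
          his (Finset.mem_filter.mpr ⟨Finset.mem_univ i, hcon⟩)
        simp only [Bool.not_eq_false] at h2
        exact h2
  · -- the measure bound
    set a1 : ℝ := (P A1).toReal with ha1def
    set a0 : ℝ := (P A0).toReal with ha0def
    set aq : ℝ := (P Aq).toReal with haqdef
    set aa : ℝ := (P Aa).toReal with haadef
    have ha1nn : 0 ≤ a1 := ENNReal.toReal_nonneg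
    have ha0nn : 0 ≤ a0 := ENNReal.toReal_nonneg
    have haqnn : 0 ≤ aq := ENNReal.toReal_nonneg
    have haann : 0 ≤ aa := ENNReal.toReal_nonneg
    have hcellval : ∀ st ∈ F, μ (cell st.1 st.2) =
        ENNReal.ofReal (a1 ^ st.2.card * a0 ^ (st.1.card - st.2.card) * aq ^ (n - st.1.card)) := by
      intro st hst
      have hts : st.2 ⊆ st.1 := by
        simp only [hFdef, Finset.mem_filter] at hst
        exact hst.2.1
      have e1 : μ (cell st.1 st.2) = ∏ i, P (Asets st.1 st.2 i) := Measure.pi_pi _ _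
      have e2 : (∏ i, P (Asets st.1 st.2 i)) =
          ∏ i : Fin n, (if i ∈ st.2 then P A1 else if i ∈ st.1 then P A0 else P Aq) := by
        apply Finset.prod_congr rfl
        intro i _
        simp only [hAsets]
        split_ifs <;> rfl
      rw [e1, e2, prod_ite_mem_comm st.1 st.2 hts]
      rw [show P A1 = ENNReal.ofReal a1 from (ENNReal.ofReal_toReal (measure_ne_top P _)).symm,
        show P A0 = ENNReal.ofReal a0 from (ENNReal.ofReal_toReal (measure_ne_top P _)).symm,
        show P Aq = ENNReal.ofReal aq from (ENNReal.ofReal_toReal (measure_ne_top P _)).symm,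
        ← ENNReal.ofReal_pow ha1nn, ← ENNReal.ofReal_pow ha0nn, ← ENNReal.ofReal_pow haqnn,
        ← ENNReal.ofReal_mul (by positivity), ← ENNReal.ofReal_mul (by positivity)]
    have hCORE : (∑ st ∈ F, a1 ^ st.2.card * a0 ^ (st.1.card - st.2.card) * aq ^ (n - st.1.card))
        ≤ δ * (2:ℝ) ^ (-c) := by
      have hKnn : 0 ≤ δ * (2:ℝ) ^ (-c) := by positivity
      -- facts about the splitting of Aa
      have ha1a0 : P A1 + P A0 = P Aa := by
        rw [← measure_union ?hd hmA0]
        · congr 1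
          ext z
          simp only [hA1def, hA0def, hAadef, Set.mem_union, Set.mem_setOf_eq]
          cases hb : z.2 <;> simp [hb]
        · case hd =>
          rw [Set.disjoint_left]
          intro z h1 h2
          rw [hA1def, Set.mem_setOf_eq] at h1
          rw [hA0def, Set.mem_setOf_eq] at h2
          rw [h1.1] at h2
          exact absurd h2.1 (by simp)
      have ha1a0R : a1 + a0 = aa := by
        rw [ha1def, ha0def, haadef, ← ENNReal.toReal_add (measure_ne_top P _) (measure_ne_top P _),
          ha1a0]
      have haaqR : aa + aq = 1 := by
        have hU : Aa ∪ Aq = Set.univ := by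
          ext z
          simp only [hAadef, hAqdef, Set.mem_union, Set.mem_setOf_eq, Set.mem_univ, iff_true]
          cases hb : h z.1 <;> simp
        have hdisj : Disjoint Aa Aq := by
          rw [Set.disjoint_left]
          intro z h1 h2
          rw [hAadef, Set.mem_setOf_eq] at h1
          rw [hAqdef, Set.mem_setOf_eq] at h2
          rw [h1] at h2
          exact absurd h2 (by simp)
        have : P Aa + P Aq = 1 := by rw [← measure_union hdisj hmAq, hU, measure_univ]
        rw [haadef, haqdef, ← ENNReal.toReal_add (measure_ne_top P _) (measure_ne_top P _), this]
        rfl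
      -- the per-`s` inner bound
      have hinner : ∀ s : Finset (Fin n),
          (∑ t ∈ Finset.univ.powerset,
            if t ⊆ s ∧ BadP (RND P h) c δ s.card t.card then
              a1 ^ t.card * a0 ^ (s.card - t.card) * aq ^ (n - s.card) else 0)
          ≤ aq ^ (n - s.card) * aa ^ s.card * (δ * (2:ℝ) ^ (-c)) := by
        intro s
        have hstep1 : (∑ t ∈ Finset.univ.powerset,
            if t ⊆ s ∧ BadP (RND P h) c δ s.card t.card then
              a1 ^ t.card * a0 ^ (s.card - t.card) * aq ^ (n - s.card) else 0)
            = ∑ t ∈ s.powerset,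
              (fun k => if BadP (RND P h) c δ s.card k then
                a1 ^ k * a0 ^ (s.card - k) * aq ^ (n - s.card) else 0) t.card := by
          rw [← Finset.sum_subset (Finset.powerset_mono.mpr (Finset.subset_univ s))
            (fun t _ htn => if_neg (fun hcon => htn (Finset.mem_powerset.mpr hcon.1)))]
          apply Finset.sum_congr rfl
          intro t ht
          rw [if_congr (and_iff_right (Finset.mem_powerset.mp ht)) rfl rfl]
        rw [hstep1, Finset.sum_powerset_apply_card
          (fun k => if BadP (RND P h) c δ s.card k then
            a1 ^ k * a0 ^ (s.card - k) * aq ^ (n - s.card) else 0)]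
        set m := s.card with hmdef
        rcases Nat.eq_zero_or_pos m with hm0 | hm
        · have hnotbad : ¬ BadP (RND P h) c δ 0 0 := by
            intro hb
            exact hb (by
              rw [show pen c δ 0 = ⊤ from if_neg (lt_irrefl 0)]
              exact le_top)
          rw [hm0]
          simp only [zero_add, Finset.sum_range_one, Nat.choose_self]
          rw [if_neg hnotbad]
          simp only [smul_zero]
          positivity
        · rcases eq_or_lt_of_le haann with haa0 | haapos
          · -- degenerate: P(h = false) = 0
            have ha10 : a1 = 0 := by linarith
            have ha00 : a0 = 0 := by linarith
            have hz : ∀ j ∈ Finset.range (m + 1), (m.choose j) •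
                (if BadP (RND P h) c δ m j then a1 ^ j * a0 ^ (m - j) * aq ^ (n - m) else 0)
                = 0 := by
              intro j _
              have : a1 ^ j * a0 ^ (m - j) * aq ^ (n - m) = 0 := by
                rcases Nat.eq_zero_or_pos j with hj0 | hjpos
                · rw [hj0, ha00, pow_zero, one_mul, zero_pow (by omega : m - 0 ≠ 0), zero_mul]
                · rw [ha10, zero_pow (by omega : j ≠ 0), zero_mul, zero_mul]
              rw [this]
              simp
            rw [Finset.sum_eq_zero hz]
            positivity
          · -- main case
            set pB : ℝ := a1 / aa with hpBdef
            set qB : ℝ := a0 / aa with hqBdef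
            have hpB0 : 0 ≤ pB := by positivity
            have hqB0 : 0 ≤ qB := by positivity
            have hpq : pB + qB = 1 := by
              rw [hpBdef, hqBdef, ← add_div, ha1a0R, div_self haapos.ne']
            set tm : ℝ := Real.sqrt ((c * Real.log 2 + Real.log (2 / δ)) / (2 * m)) with htmdef
            have hE0 : 0 ≤ c * Real.log 2 + Real.log (2 / δ) :=
              add_nonneg (mul_nonneg hc (Real.log_nonneg one_le_two))
                (Real.log_nonneg (by rw [le_div_iff₀ hδ0]; linarith))
            have htm0 : 0 ≤ tm := Real.sqrt_nonneg _
            have hmR : (0:ℝ) < m := by exact_mod_cast hm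
            have hPAa : 0 < P Aa := by
              rw [pos_iff_ne_zero]
              intro hcon
              rw [haadef, hcon] at haapos
              simp at haapos
            have hRND : RND P h = P A1 / P Aa := by
              unfold RND
              rw [if_pos hPAa]
            have hRNDfin : RND P h ≠ ⊤ := by
              rw [hRND]
              exact (ENNReal.div_lt_top (measure_ne_top P _) hPAa.ne').ne
            have hRNDval : (RND P h).toReal = pB := by
              rw [hRND, ENNReal.toReal_div, hpBdef, ha1def, haadef]
            have himp : ∀ j : ℕ, BadP (RND P h) c δ m j →
                (m:ℝ) * tm ≤ |(j:ℝ) - m * pB| := by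
              intro j hb
              unfold BadP at hb
              rw [if_pos hm] at hb
              have hpen : pen c δ m = ENNReal.ofReal tm := by
                unfold pen
                rw [if_pos hm]
              rw [hpen] at hb
              have hfin2 : ((j:ℝ≥0∞) / (m:ℝ≥0∞)) ≠ ⊤ :=
                (ENNReal.div_lt_top (ENNReal.natCast_ne_top j)
                  (by exact_mod_cast hm.ne' : (m:ℝ≥0∞) ≠ 0)).ne
              rw [edistE_eq hRNDfin hfin2] at hb
              have hY : ((j:ℝ≥0∞) / (m:ℝ≥0∞)).toReal = (j:ℝ) / (m:ℝ) := by
                rw [ENNReal.toReal_div, ENNReal.toReal_natCast, ENNReal.toReal_natCast]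
              rw [hRNDval, hY] at hb
              have habs : tm < |pB - (j:ℝ) / m| := by
                by_contra hcon
                push_neg at hcon
                exact hb (ENNReal.ofReal_le_ofReal hcon)
              have h1 : (m:ℝ) * (pB - j / m) = m * pB - j := by
                field_simp
              calc (m:ℝ) * tm ≤ m * |pB - (j:ℝ) / m| :=
                    mul_le_mul_of_nonneg_left habs.le hmR.le
                _ = |(m:ℝ) * (pB - j / m)| := by rw [abs_mul, abs_of_nonneg hmR.le]
                _ = |(j:ℝ) - m * pB| := by rw [h1, abs_sub_comm]
            have ha1' : a1 = aa * pB := by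
              rw [hpBdef, mul_div_assoc']
              rw [mul_comm, mul_div_assoc, div_self haapos.ne', mul_one]
            have ha0' : a0 = aa * qB := by
              rw [hqBdef, mul_div_assoc']
              rw [mul_comm, mul_div_assoc, div_self haapos.ne', mul_one]
            have hterm : ∀ j ∈ Finset.range (m + 1), (m.choose j) •
                (if BadP (RND P h) c δ m j then a1 ^ j * a0 ^ (m - j) * aq ^ (n - m) else 0)
                ≤ aq ^ (n - m) * aa ^ m * (if (m:ℝ) * tm ≤ |(j:ℝ) - m * pB| then
                    (m.choose j : ℝ) * (pB ^ j * qB ^ (m - j)) else 0) := by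
              intro j hj
              have hjm : j ≤ m := by
                rw [Finset.mem_range] at hj
                omega
              rw [nsmul_eq_mul]
              by_cases hB : BadP (RND P h) c δ m j
              · rw [if_pos hB, if_pos (himp j hB)]
                apply le_of_eq
                have hsplit : aa ^ m = aa ^ j * aa ^ (m - j) := by
                  rw [← pow_add]
                  congr 1
                  omega
                rw [ha1', ha0', mul_pow, mul_pow, hsplit]
                ring
              · rw [if_neg hB, mul_zero]
                apply mul_nonneg (by positivity)
                split_ifs
                · positivity
                · exact le_refl 0
            calc (∑ j ∈ Finset.range (m + 1), (m.choose j) •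
                (if BadP (RND P h) c δ m j then a1 ^ j * a0 ^ (m - j) * aq ^ (n - m) else 0))
                ≤ ∑ j ∈ Finset.range (m + 1), aq ^ (n - m) * aa ^ m *
                  (if (m:ℝ) * tm ≤ |(j:ℝ) - m * pB| then
                    (m.choose j : ℝ) * (pB ^ j * qB ^ (m - j)) else 0) :=
                  Finset.sum_le_sum hterm
              _ = aq ^ (n - m) * aa ^ m * ∑ j ∈ Finset.range (m + 1),
                  (if (m:ℝ) * tm ≤ |(j:ℝ) - m * pB| then
                    (m.choose j : ℝ) * (pB ^ j * qB ^ (m - j)) else 0) := by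
                  rw [← Finset.mul_sum]
              _ ≤ aq ^ (n - m) * aa ^ m * (2 * Real.exp (-(2 * m * tm ^ 2))) :=
                  mul_le_mul_of_nonneg_left (binom_two_sided m hpB0 hqB0 hpq htm0)
                    (by positivity)
              _ = aq ^ (n - m) * aa ^ m * (δ * (2:ℝ) ^ (-c)) := by
                  congr 1
                  have htm2 : tm ^ 2 = (c * Real.log 2 + Real.log (2 / δ)) / (2 * m) :=
                    Real.sq_sqrt (div_nonneg hE0 (mul_nonneg zero_le_two hmR.le))
                  have h2m : 2 * (m:ℝ) * tm ^ 2 = c * Real.log 2 + Real.log (2 / δ) := by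
                    rw [htm2]
                    field_simp
                  rw [h2m]
                  have hsplitexp : Real.exp (-(c * Real.log 2 + Real.log (2 / δ)))
                      = Real.exp (-(c * Real.log 2)) * Real.exp (-Real.log (2 / δ)) := by
                    rw [← Real.exp_add]
                    ring_nf
                  have he1 : Real.exp (-(c * Real.log 2)) = (2:ℝ) ^ (-c) := by
                    rw [Real.rpow_def_of_pos (by norm_num : (0:ℝ) < 2)]
                    ring_nf
                  have he2 : Real.exp (-Real.log (2 / δ)) = δ / 2 := by
                    rw [Real.exp_neg, Real.exp_log (by positivity), inv_div]
                  rw [hsplitexp, he1, he2]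
                  ring
      -- assemble the outer sum
      rw [hFdef, Finset.sum_filter, Finset.sum_product]
      calc (∑ s ∈ Finset.univ.powerset, ∑ t ∈ Finset.univ.powerset,
            if t ⊆ s ∧ BadP (RND P h) c δ s.card t.card then
              a1 ^ t.card * a0 ^ (s.card - t.card) * aq ^ (n - s.card) else 0)
          ≤ ∑ s ∈ Finset.univ.powerset,
            aq ^ (n - s.card) * aa ^ s.card * (δ * (2:ℝ) ^ (-c)) :=
            Finset.sum_le_sum (fun s _ => hinner s)
        _ = δ * (2:ℝ) ^ (-c) := by
            rw [Finset.sum_powerset_apply_card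
              (fun k => aq ^ (n - k) * aa ^ k * (δ * (2:ℝ) ^ (-c)))]
            have hcard : (Finset.univ : Finset (Fin n)).card = n := by simp
            rw [hcard]
            have e1 : (∑ j ∈ Finset.range (n + 1), (n.choose j) •
                (aq ^ (n - j) * aa ^ j * (δ * (2:ℝ) ^ (-c))))
                = (∑ j ∈ Finset.range (n + 1), aa ^ j * aq ^ (n - j) * (n.choose j))
                  * (δ * (2:ℝ) ^ (-c)) := by
              rw [Finset.sum_mul]
              apply Finset.sum_congr rfl
              intro j _
              rw [nsmul_eq_mul]
              ring
            rw [e1, ← add_pow, haaqR, one_pow, one_mul]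
    calc μ (⋃ st ∈ F, cell st.1 st.2) ≤ ∑ st ∈ F, μ (cell st.1 st.2) :=
          measure_biUnion_finset_le F _
      _ = ∑ st ∈ F, ENNReal.ofReal
            (a1 ^ st.2.card * a0 ^ (st.1.card - st.2.card) * aq ^ (n - st.1.card)) :=
          Finset.sum_congr rfl hcellval
      _ = ENNReal.ofReal (∑ st ∈ F,
            a1 ^ st.2.card * a0 ^ (st.1.card - st.2.card) * aq ^ (n - st.1.card)) :=
          (ENNReal.ofReal_sum_of_nonneg (fun st _ => by positivity)).symm
      _ ≤ ENNReal.ofReal (δ * (2:ℝ) ^ (-c)) := ENNReal.ofReal_le_ofReal hCORE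
      _ = ENNReal.ofReal δ * ENNReal.ofReal ((2:ℝ) ^ (-c)) := ENNReal.ofReal_mul hδ0.le

set_option maxHeartbeats 1000000 in
/-- **Theorem 1, FNDR part.** For a countable class `H` of classifiers with codelengths `cl`
satisfying the Kraft inequality, with probability at least `1 - δ` over the draw of an i.i.d.
training sample of size `n` from `P`, every `h ∈ H` satisfies
`|R_ND(h) - R̂_ND(h)| ≤ φ_ND(h, δ)`.  This holds for every `n ≥ 1`, every `0 < δ < 1` and
every underlying distribution `P`. -/
theorem fndr_uniform_deviation_bound
    {𝓧 : Type*} [MeasurableSpace 𝓧] (P : Measure (𝓧 × Bool)) [IsProbabilityMeasure P]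
    (H : Set (𝓧 → Bool)) (hHcount : H.Countable) (hHmeas : ∀ h ∈ H, Measurable h)
    (cl : (𝓧 → Bool) → ℝ)
    (hKraft : ∑' h : H, (2 : ℝ≥0∞) ^ (-(cl h.1)) ≤ 1)
    (n : ℕ) (hn : 1 ≤ n) (δ : ℝ) (hδ0 : 0 < δ) (hδ1 : δ < 1) :
    ENNReal.ofReal (1 - δ) ≤
      (Measure.pi fun _ : Fin n => P)
        {ω | ∀ h ∈ H, edistE (RND P h) (RhatND h ω) ≤ pen (cl h) δ (nND h ω)} := by
  classical
  set μ := Measure.pi fun _ : Fin n => P with hμdef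
  have : IsProbabilityMeasure μ := by rw [hμdef]; infer_instance
  haveI := hHcount.to_subtype
  -- codelengths are nonnegative
  have hc : ∀ h : H, 0 ≤ cl h.1 := by
    intro h
    by_contra hcon
    push_neg at hcon
    have h1 : (2 : ℝ≥0∞) ^ (-(cl h.1)) ≤ 1 := le_trans (ENNReal.le_tsum h) hKraft
    have h2 : (1 : ℝ≥0∞) < 2 ^ (-(cl h.1)) := by
      calc (1 : ℝ≥0∞) = 2 ^ (0 : ℝ) := by rw [ENNReal.rpow_zero]
        _ < 2 ^ (-(cl h.1)) := by
          apply ENNReal.rpow_lt_rpow_of_exponent_lt (by norm_num) ENNReal.ofNat_ne_top (by linarith)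
    exact absurd h1 (not_le.mpr h2)
  choose B hBmeas hBsub hBle using fun h : H =>
    per_h_bound P h.1 (hHmeas h.1 h.2) n (cl h.1) δ (hc h) hδ0 hδ1
  set U : Set (Fin n → 𝓧 × Bool) := ⋃ h : H, B h with hUdef
  have hUmeas : MeasurableSet U := MeasurableSet.iUnion (fun h => hBmeas h)
  have hsub : Uᶜ ⊆ {ω | ∀ h ∈ H, edistE (RND P h) (RhatND h ω) ≤ pen (cl h) δ (nND h ω)} := by
    intro ω hω h hh
    by_contra hcon
    apply hω
    rw [hUdef]
    exact Set.mem_iUnion.mpr ⟨⟨h, hh⟩, hBsub ⟨h, hh⟩ hcon⟩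
  have hofReal : ∀ h : H, ENNReal.ofReal ((2:ℝ) ^ (-(cl h.1))) = (2:ℝ≥0∞) ^ (-(cl h.1)) := by
    intro h
    rw [← ENNReal.ofReal_rpow_of_pos (by norm_num : (0:ℝ) < 2)]
    norm_num
  have hμU : μ U ≤ ENNReal.ofReal δ := by
    calc μ U ≤ ∑' h : H, μ (B h) := measure_iUnion_le B
      _ ≤ ∑' h : H, ENNReal.ofReal δ * ((2:ℝ≥0∞) ^ (-(cl h.1))) := by
          apply ENNReal.tsum_le_tsum
          intro h
          rw [← hofReal h]
          exact hBle h
      _ = ENNReal.ofReal δ * ∑' h : H, (2:ℝ≥0∞) ^ (-(cl h.1)) := ENNReal.tsum_mul_left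
      _ ≤ ENNReal.ofReal δ * 1 := mul_le_mul_right hKraft _
      _ = ENNReal.ofReal δ := mul_one _
  calc ENNReal.ofReal (1 - δ) = 1 - ENNReal.ofReal δ := by
        rw [ENNReal.ofReal_sub _ hδ0.le, ENNReal.ofReal_one]
    _ ≤ 1 - μ U := tsub_le_tsub_left hμU 1
    _ = μ Uᶜ := (prob_compl_eq_one_sub hUmeas).symm
    _ ≤ μ {ω | ∀ h ∈ H, edistE (RND P h) (RhatND h ω) ≤ pen (cl h) δ (nND h ω)} :=
        measure_mono hsub
end

section
/- Assume E*_λ := inf over all measurable classifiers of E_λ(h) is finite, and assume the nested family {ℋ_k} has the universal approximation property lim_{k→∞} inf_{h∈ℋ_k} E_λ(h) = E*_λ. Then for every ν > 0 there exist a classifier h′ (belonging to ℋ_{k_m} for some m) and an integer N₁ such that E_λ(h′) ≤ E*_λ + ν and, for all n > N₁, the probability that h′ ∈ Ĥ_n (i.e., that both n_ND(h′, Z^n)/n ≥ p_n and n_D(h′, Z^n)/n ≥ p_n) is at least 1 − 1/n². -/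
open MeasureTheory ENNReal Filter

/-- The performance measure `E_λ(h) := R_ND(h) + λ · R_D(h)`. -/
noncomputable def Elam {𝓧 : Type*} [MeasurableSpace 𝓧] (P : Measure (𝓧 × Bool))
    (lam : ℝ) (h : 𝓧 → Bool) : ℝ≥0∞ :=
  RND P h + ENNReal.ofReal lam * RD P h

/-- The optimal value `E*_λ`, infimum over all measurable classifiers. -/
noncomputable def ElamStar {𝓧 : Type*} [MeasurableSpace 𝓧] (P : Measure (𝓧 × Bool))
    (lam : ℝ) : ℝ≥0∞ :=
  ⨅ h ∈ {h : 𝓧 → Bool | Measurable h}, Elam P lam h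

private lemma prod_ite_eq_pow_count {α : Type*} {n : ℕ} (g : α → Bool) (ω : Fin n → α) :
    (∏ i : Fin n, (if g (ω i) = true then (1/2 : ℝ) else 1)) =
      (1/2 : ℝ) ^ (Finset.univ.filter fun i : Fin n => g (ω i) = true).card := by
  rw [Finset.prod_ite, Finset.prod_const, Finset.prod_const, one_pow, mul_one]

private lemma conc_lemma {α : Type*} [MeasurableSpace α] (μ : Measure α) [IsProbabilityMeasure μ]
    (g : α → Bool) (hg : Measurable g) (hq : 0 < μ {a | g a = true}) :
    ∃ N : ℕ, ∀ n : ℕ, N < n →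
      (Measure.pi fun _ : Fin n => μ)
        {ω : Fin n → α |
          ((Finset.univ.filter fun i : Fin n => g (ω i) = true).card : ℝ) / n < 1 / Real.log n}
        ≤ ENNReal.ofReal (1 / (2 * (n : ℝ) ^ 2)) := by
  letI : MeasureSpace α := ⟨μ⟩
  haveI : IsProbabilityMeasure (volume : Measure α) := ‹IsProbabilityMeasure μ›
  set s : Set α := {a | g a = true} with hs_def
  have hs : MeasurableSet s := hg (measurableSet_singleton true)
  set q : ℝ := (μ s).toReal with hq_def
  have hq0 : 0 < q := ENNReal.toReal_pos hq.ne' (measure_ne_top μ s)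
  have hq1 : q ≤ 1 := by
    have := prob_le_one (μ := μ) (s := s)
    calc q ≤ (1 : ℝ≥0∞).toReal := ENNReal.toReal_mono one_ne_top this
    _ = 1 := by simp
  set b : ℝ := 1 - q / 2 with hb_def
  have hb0 : 0 < b := by simp only [hb_def]; linarith
  have hb1 : b < 1 := by simp only [hb_def]; linarith
  set g' : α → ℝ := fun a => if g a = true then 1/2 else 1 with hg'_def
  have hg'meas : Measurable g' :=
    Measurable.ite (hg (measurableSet_singleton true)) measurable_const measurable_const
  have hg'int : Integrable g' μ := by
    refine (integrable_const (1:ℝ)).mono' hg'meas.aestronglyMeasurable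
      (Eventually.of_forall fun a => ?_)
    by_cases h : g a = true <;> simp [hg'_def, h] <;> norm_num
  have hcompl : (μ sᶜ).toReal = 1 - q := by
    rw [measure_compl hs (measure_ne_top _ _), measure_univ,
      ENNReal.toReal_sub_of_le prob_le_one one_ne_top, ENNReal.toReal_one, hq_def]
  have hdecomp : g' = s.indicator (fun _ => (1/2:ℝ)) + sᶜ.indicator (fun _ => 1) := by
    funext a
    by_cases h : a ∈ s
    · simp [hg'_def, Set.indicator_apply, h, show g a = true from h]
    · simp [hg'_def, Set.indicator_apply, h, show ¬ g a = true from h]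
  have hint : ∫ a, g' a ∂μ = b := by
    rw [hdecomp]
    simp only [Pi.add_apply]
    rw [integral_add ((integrable_const _).indicator hs) ((integrable_const _).indicator hs.compl)]
    rw [integral_indicator_const _ hs, integral_indicator_const _ hs.compl, measureReal_def,
      measureReal_def, hcompl]
    simp only [smul_eq_mul, hb_def, ← hq_def]
    ring
  -- key per-n bound
  have key : ∀ n m : ℕ, (Measure.pi fun _ : Fin n => μ)
      {ω : Fin n → α | (Finset.univ.filter fun i : Fin n => g (ω i) = true).card ≤ m}
      ≤ ENNReal.ofReal (b ^ n * 2 ^ m) := by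
    intro n m
    have hvol : (Measure.pi fun _ : Fin n => μ) = (volume : Measure (Fin n → α)) := rfl
    set F : (Fin n → α) → ℝ := fun ω => ∏ i, g' (ω i) with hF_def
    have hFprod : ∀ ω, F ω
        = (1/2:ℝ) ^ (Finset.univ.filter fun i : Fin n => g (ω i) = true).card :=
      fun ω => prod_ite_eq_pow_count g ω
    have hFint : Integrable F (volume : Measure (Fin n → α)) :=
      Integrable.fintype_prod (f := fun _ : Fin n => g') (fun _ => hg'int)
    have hFnonneg : 0 ≤ᵐ[(volume : Measure (Fin n → α))] F :=
      Eventually.of_forall fun ω => by rw [hFprod]; positivity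
    have hFval : ∫ ω, F ω = b ^ n := by
      rw [hF_def, ← hvol, MeasureTheory.integral_fintype_prod_eq_pow g',
        hint, Fintype.card_fin]
    have hmarkov := mul_meas_ge_le_integral_of_nonneg hFnonneg hFint ((1/2:ℝ)^m)
    rw [hFval] at hmarkov
    have hsub : {ω : Fin n → α | (Finset.univ.filter fun i : Fin n => g (ω i) = true).card ≤ m}
        ⊆ {ω : Fin n → α | (1/2:ℝ)^m ≤ F ω} := by
      intro ω hω
      rw [Set.mem_setOf_eq, hFprod]
      exact pow_le_pow_of_le_one (by norm_num) (by norm_num) hω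
    have hfin1 : (volume : Measure (Fin n → α))
        {ω : Fin n → α | (Finset.univ.filter fun i : Fin n => g (ω i) = true).card ≤ m} ≠ ⊤ :=
      measure_ne_top _ _
    have hmono := ENNReal.toReal_mono (measure_ne_top _ _) (measure_mono (μ := (volume : Measure (Fin n → α))) hsub)
    have hpowpos : (0:ℝ) < (1/2:ℝ)^m := by positivity
    have htr : ((volume : Measure (Fin n → α))
        {ω : Fin n → α | (Finset.univ.filter fun i : Fin n => g (ω i) = true).card ≤ m}).toReal
        ≤ b ^ n * 2 ^ m := by
      have h2 : ((volume : Measure (Fin n → α)) {ω : Fin n → α | (1/2:ℝ)^m ≤ F ω}).toReal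
          ≤ b ^ n * 2 ^ m := by
        have h3 : ((1/2:ℝ))^m * ((volume : Measure (Fin n → α))
            {ω : Fin n → α | (1/2:ℝ)^m ≤ F ω}).toReal ≤ b ^ n := hmarkov
        have h4 : ((1/2:ℝ))^m * (2:ℝ)^m = 1 := by
          rw [← mul_pow]; norm_num
        nlinarith [ENNReal.toReal_nonneg (a := (volume : Measure (Fin n → α))
          {ω : Fin n → α | (1/2:ℝ)^m ≤ F ω}), pow_pos (show (0:ℝ) < 2 by norm_num) m]
      linarith
    rw [hvol, ← ENNReal.ofReal_toReal hfin1]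
    exact ENNReal.ofReal_le_ofReal htr
  -- asymptotics
  have hblog : Real.log b < 0 := Real.log_neg hb0 hb1
  set ψ : ℕ → ℝ := fun n => Real.log b + Real.log 2 / Real.log n
      + Real.log 2 / n + 2 * (Real.log n / n) with hψ_def
  have hψlim : Tendsto ψ atTop (nhds (Real.log b)) := by
    have hlogn : Tendsto (fun n : ℕ => Real.log n) atTop atTop :=
      Real.tendsto_log_atTop.comp tendsto_natCast_atTop_atTop
    have h1 : Tendsto (fun n : ℕ => Real.log 2 / Real.log n) atTop (nhds 0) := by
      simpa [div_eq_mul_inv] using (tendsto_const_nhds (x := Real.log 2)).mul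
        hlogn.inv_tendsto_atTop
    have h2 : Tendsto (fun n : ℕ => Real.log 2 / (n:ℝ)) atTop (nhds 0) :=
      tendsto_const_div_atTop_nhds_zero_nat _
    have h3 : Tendsto (fun n : ℕ => 2 * (Real.log n / n)) atTop (nhds 0) := by
      have := (Real.isLittleO_log_id_atTop.tendsto_div_nhds_zero).comp
        (tendsto_natCast_atTop_atTop (R := ℝ))
      simpa using (tendsto_const_nhds (x := (2:ℝ))).mul this
    have := (((tendsto_const_nhds (x := Real.log b)).add h1).add h2).add h3
    simpa [hψ_def] using this
  have hev : ∀ᶠ n : ℕ in atTop, ψ n < 0 ∧ 3 ≤ n :=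
    (hψlim.eventually_lt_const hblog).and (eventually_ge_atTop 3)
  obtain ⟨N, hN⟩ := eventually_atTop.mp hev
  refine ⟨N, fun n hn => ?_⟩
  obtain ⟨hψn, hn3⟩ := hN n hn.le
  have hnpos' : (0:ℝ) < n := by exact_mod_cast Nat.lt_of_lt_of_le (by norm_num) hn3
  have hlogn1 : 1 < Real.log n := by
    rw [Real.lt_log_iff_exp_lt hnpos']
    calc Real.exp 1 < 2.7182818286 := Real.exp_one_lt_d9
    _ ≤ n := by
      have : (3:ℝ) ≤ n := by exact_mod_cast hn3
      linarith
  have hlogpos : 0 < Real.log n := lt_trans one_pos hlogn1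
  set m : ℕ := Nat.floor ((n:ℝ) / Real.log n) with hm_def
  have hmx : (m:ℝ) ≤ (n:ℝ) / Real.log n := Nat.floor_le (by positivity)
  -- event inclusion
  have hsub : {ω : Fin n → α |
      ((Finset.univ.filter fun i : Fin n => g (ω i) = true).card : ℝ) / n < 1 / Real.log n}
      ⊆ {ω : Fin n → α | (Finset.univ.filter fun i : Fin n => g (ω i) = true).card ≤ m} := by
    intro ω hω
    rw [Set.mem_setOf_eq] at hω ⊢
    refine Nat.le_floor ?_
    set c := ((Finset.univ.filter fun i : Fin n => g (ω i) = true).card : ℝ)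
    have h1 : c < n / Real.log n := by
      rw [div_lt_div_iff₀ hnpos' hlogpos] at hω
      rw [lt_div_iff₀ hlogpos]
      linarith
    exact h1.le
  refine (measure_mono hsub).trans ((key n m).trans (ENNReal.ofReal_le_ofReal ?_))
  -- real inequality: b^n * 2^m ≤ 1/(2 n²)
  have hφ : (n:ℝ) * Real.log b + m * Real.log 2 + (Real.log 2 + 2 * Real.log n) ≤ 0 := by
    have hmlog : (m:ℝ) * Real.log 2 ≤ ((n:ℝ) / Real.log n) * Real.log 2 :=
      mul_le_mul_of_nonneg_right hmx (Real.log_nonneg one_le_two)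
    have hexpand : (n:ℝ) * ψ n
        = n * Real.log b + ((n:ℝ) / Real.log n) * Real.log 2 + Real.log 2 + 2 * Real.log n := by
      rw [hψ_def]
      field_simp
    have hnψ : (n:ℝ) * ψ n ≤ 0 := mul_nonpos_of_nonneg_of_nonpos hnpos'.le hψn.le
    rw [hexpand] at hnψ
    linarith
  have hlhs : b ^ n * 2 ^ m = Real.exp ((n:ℝ) * Real.log b + m * Real.log 2) := by
    rw [Real.exp_add, Real.exp_nat_mul, Real.exp_nat_mul, Real.exp_log hb0,
      Real.exp_log (by norm_num : (0:ℝ) < 2)]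
  have hrhs : (1 : ℝ) / (2 * (n:ℝ)^2) = Real.exp (-(Real.log 2 + 2 * Real.log n)) := by
    rw [Real.exp_neg, Real.exp_add, Real.exp_log (by norm_num : (0:ℝ) < 2)]
    rw [show (2:ℝ) * Real.log n = (2:ℕ) * Real.log n by norm_num, Real.exp_nat_mul,
      Real.exp_log hnpos']
    norm_num
  rw [hlhs, hrhs]
  exact Real.exp_le_exp.mpr (by linarith)

/-- **Lemma 1.** Assume `E*_λ < ∞` and that the nested family `{ℋ_k}` of finite classifier
classes has the universal approximation property `inf_{h ∈ ℋ_k} E_λ(h) → E*_λ`.  Then for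
every `ν > 0` there exist a classifier `h′` (in `ℋ_m` for some `m`) and `N₁` such that
`E_λ(h′) ≤ E*_λ + ν` and, for all `n > N₁`, the probability that `h′ ∈ Ĥ_n` — i.e. that
`h′ ∈ ℋ_{k_n}` and both `n_ND(h′, Zⁿ)/n ≥ p_n` and `n_D(h′, Zⁿ)/n ≥ p_n`, where
`p_n = 1/log n` — is at least `1 - 1/n²`. -/
theorem approximating_classifier_eventually_admissible
    {𝓧 : Type*} [MeasurableSpace 𝓧] (P : Measure (𝓧 × Bool)) [IsProbabilityMeasure P]
    (lam : ℝ) (hlam : 0 < lam)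
    (ℋ : ℕ → Finset (𝓧 → Bool)) (hmeas : ∀ m, ∀ h ∈ ℋ m, Measurable h)
    (hnested : ∀ m, ℋ m ⊆ ℋ (m + 1))
    (k : ℕ → ℕ) (hk : Tendsto k atTop atTop)
    (happrox : Tendsto (fun K => ⨅ h ∈ ℋ K, Elam P lam h) atTop (nhds (ElamStar P lam)))
    (hfin : ElamStar P lam < ⊤)
    (ν : ℝ) (hν : 0 < ν) :
    ∃ (h' : 𝓧 → Bool) (N₁ : ℕ), (∃ m, h' ∈ ℋ m) ∧
      Elam P lam h' ≤ ElamStar P lam + ENNReal.ofReal ν ∧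
      ∀ n, N₁ < n →
        ENNReal.ofReal (1 - 1 / (n : ℝ) ^ 2) ≤
          (Measure.pi fun _ : Fin n => P)
            {ω | h' ∈ ℋ (k n) ∧ (1 / Real.log n ≤ (nND h' ω : ℝ) / n) ∧
              (1 / Real.log n ≤ (nD h' ω : ℝ) / n)} := by
  -- obtain a near-optimal classifier
  have hlt : ElamStar P lam < ElamStar P lam + ENNReal.ofReal ν :=
    ENNReal.lt_add_right hfin.ne (ENNReal.ofReal_pos.mpr hν).ne'
  obtain ⟨K, hK⟩ := (happrox.eventually_lt_const hlt).exists
  obtain ⟨h', hh'⟩ := iInf_lt_iff.mp hK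
  obtain ⟨hmem, hElt⟩ := iInf_lt_iff.mp hh'
  have hm' : Measurable h' := hmeas K h' hmem
  have hEtop : Elam P lam h' < ⊤ :=
    hElt.trans (ENNReal.add_lt_top.mpr ⟨hfin, ENNReal.ofReal_lt_top⟩)
  have hRND_top : RND P h' ≠ ⊤ := by
    intro h
    rw [Elam, h, top_add] at hEtop
    exact (lt_irrefl _ hEtop)
  have hRD_top : RD P h' ≠ ⊤ := by
    intro h
    rw [Elam, h, ENNReal.mul_top (by simpa using (ENNReal.ofReal_pos.mpr hlam).ne'),
      add_top] at hEtop
    exact (lt_irrefl _ hEtop)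
  have hqD : 0 < P {z : 𝓧 × Bool | h' z.1 = true} := by
    by_contra hc
    exact hRD_top (by rw [RD, if_neg hc])
  have hqND : 0 < P {z : 𝓧 × Bool | h' z.1 = false} := by
    by_contra hc
    exact hRND_top (by rw [RND, if_neg hc])
  -- the two counting functions
  set gD : 𝓧 × Bool → Bool := fun z => h' z.1 with hgD_def
  set gND : 𝓧 × Bool → Bool := fun z => if h' z.1 = true then false else true with hgND_def
  have hgDmeas : Measurable gD := hm'.comp measurable_fst
  have hgNDmeas : Measurable gND :=
    Measurable.ite ((hm'.comp measurable_fst) (measurableSet_singleton true))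
      measurable_const measurable_const
  have hgNDiff : ∀ z : 𝓧 × Bool, (gND z = true ↔ h' z.1 = false) := by
    intro z
    cases hb : h' z.1 <;> simp [hgND_def, hb]
  have hqD' : 0 < P {z : 𝓧 × Bool | gD z = true} := hqD
  have hqND' : 0 < P {z : 𝓧 × Bool | gND z = true} := by
    have : {z : 𝓧 × Bool | gND z = true} = {z : 𝓧 × Bool | h' z.1 = false} :=
      Set.ext fun z => hgNDiff z
    rw [this]; exact hqND
  obtain ⟨ND, hND⟩ := conc_lemma P gD hgDmeas hqD'
  obtain ⟨NND, hNND⟩ := conc_lemma P gND hgNDmeas hqND'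
  -- membership index
  have hmono : Monotone ℋ := monotone_nat_of_le_succ fun m => Finset.le_iff_subset.mpr (hnested m)
  obtain ⟨N₀, hN₀⟩ := eventually_atTop.mp (hk.eventually_ge_atTop K)
  refine ⟨h', max N₀ (max ND NND), ⟨K, hmem⟩, hElt.le, fun n hn => ?_⟩
  have hnN₀ : N₀ ≤ n := le_of_lt (lt_of_le_of_lt (le_max_left _ _) hn)
  have hnND : ND < n := lt_of_le_of_lt ((le_max_left _ _).trans (le_max_right _ _)) hn
  have hnNND : NND < n := lt_of_le_of_lt ((le_max_right _ _).trans (le_max_right _ _)) hn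
  have hmemn : h' ∈ ℋ (k n) := hmono (hN₀ n hnN₀) hmem
  set π := (Measure.pi fun _ : Fin n => P) with hπ_def
  haveI : IsProbabilityMeasure π := by rw [hπ_def]; infer_instance
  -- identify counts
  have hcountD : ∀ ω : Fin n → 𝓧 × Bool,
      nD h' ω = (Finset.univ.filter fun i : Fin n => gD (ω i) = true).card := fun ω => rfl
  have hcountND : ∀ ω : Fin n → 𝓧 × Bool,
      nND h' ω = (Finset.univ.filter fun i : Fin n => gND (ω i) = true).card := by
    intro ω
    unfold nND
    congr 1
    exact Finset.filter_congr fun i _ => (hgNDiff (ω i)).symm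
  -- bad events
  set E1 : Set (Fin n → 𝓧 × Bool) :=
    {ω | ((Finset.univ.filter fun i : Fin n => gND (ω i) = true).card : ℝ) / n
      < 1 / Real.log n} with hE1_def
  set E2 : Set (Fin n → 𝓧 × Bool) :=
    {ω | ((Finset.univ.filter fun i : Fin n => gD (ω i) = true).card : ℝ) / n
      < 1 / Real.log n} with hE2_def
  have hE1 : π E1 ≤ ENNReal.ofReal (1 / (2 * (n:ℝ)^2)) := hNND n hnNND
  have hE2 : π E2 ≤ ENNReal.ofReal (1 / (2 * (n:ℝ)^2)) := hND n hnND
  set G : Set (Fin n → 𝓧 × Bool) :=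
    {ω | h' ∈ ℋ (k n) ∧ (1 / Real.log n ≤ (nND h' ω : ℝ) / n) ∧
      (1 / Real.log n ≤ (nD h' ω : ℝ) / n)} with hG_def
  have hGc : Gᶜ ⊆ E1 ∪ E2 := by
    intro ω hω
    simp only [hG_def, Set.mem_compl_iff, Set.mem_setOf_eq, not_and_or, not_le] at hω
    rcases hω with h | h | h
    · exact absurd hmemn h
    · exact Or.inl (by rw [hE1_def, Set.mem_setOf_eq, ← hcountND ω]; exact h)
    · exact Or.inr (by rw [hE2_def, Set.mem_setOf_eq, ← hcountD ω]; exact h)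
  have hGcle : π Gᶜ ≤ ENNReal.ofReal (1 / (n:ℝ)^2) := by
    calc π Gᶜ ≤ π (E1 ∪ E2) := measure_mono hGc
    _ ≤ π E1 + π E2 := measure_union_le _ _
    _ ≤ ENNReal.ofReal (1 / (2 * (n:ℝ)^2)) + ENNReal.ofReal (1 / (2 * (n:ℝ)^2)) :=
        add_le_add hE1 hE2
    _ = ENNReal.ofReal (1 / (n:ℝ)^2) := by
        rw [← ENNReal.ofReal_add (by positivity) (by positivity)]
        congr 1
        have hn0 : (0:ℝ) < n := by
          have : 0 < n := lt_of_le_of_lt (Nat.zero_le _) hn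
          exact_mod_cast this
        field_simp
        ring
  have hone : (1 : ℝ≥0∞) ≤ π G + ENNReal.ofReal (1 / (n:ℝ)^2) := by
    have h1 : (1 : ℝ≥0∞) = π Set.univ := (measure_univ).symm
    have h2 : π Set.univ ≤ π G + π Gᶜ := by
      have := measure_union_le (μ := π) G Gᶜ
      rwa [Set.union_compl_self] at this
    exact h1.le.trans (h2.trans (add_le_add_right hGcle _))
  calc ENNReal.ofReal (1 - 1 / (n:ℝ)^2)
      = ENNReal.ofReal 1 - ENNReal.ofReal (1 / (n:ℝ)^2) := ENNReal.ofReal_sub _ (by positivity)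
    _ ≤ π G := by
        rw [ENNReal.ofReal_one]
        exact tsub_le_iff_right.mpr hone
end

section
/- Let ℋ be a class of classifiers, and for i = 0, 1 let R_i : ℋ → extended reals be error functionals with data-based estimates R̂_i and penalties φ_i(h, δ) satisfying, for every 0 < δ < 1, P_{Z^n}( sup_{h∈ℋ} [ |R_i(h) − R̂_i(h)| − φ_i(h, δ) ] > 0 ) ≤ δ. Fix 0 < α < 1, let h* := argmin_{h∈ℋ} R_1(h) subject to R_0(h) ≤ α, and let ĥ := argmin_{h∈ℋ} R̂_1(h) + φ_1(h, δ) subject to R̂_0(h) ≤ α + φ_0(h, δ). Then for any δ > 0 and any n ≥ 1, with probability at least 1 − 2δ over the draw of the training data, both R_1(ĥ) ≤ R_1(h*) + 2 φ_1(h*, δ) and R_0(ĥ) ≤ α + 2 φ_0(ĥ, δ). The result holds regardless of the data-generating distribution. -/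
open MeasureTheory ENNReal

/-- **Theorem 3 (general constrained learning).** Let `R₀, R₁` be Type I/II error
functionals on a class `H` of classifiers, with data-based estimates `R̂₀, R̂₁` and
penalties `φ₀, φ₁` each forming a uniform two-sided confidence interval at level `δ`
(for every `0 < δ < 1`).  Let `h*` minimize `R₁` over `{h ∈ H : R₀(h) ≤ α}` and let `ĥ`
minimize `R̂₁ + φ₁` over `{h ∈ H : R̂₀(h) ≤ α + φ₀(h, δ)}`.  Then for any `δ > 0` and any
`n ≥ 1`, with probability at least `1 - 2δ` over the training sample, both
`R₁(ĥ) ≤ R₁(h*) + 2φ₁(h*, δ)` and `R₀(ĥ) ≤ α + 2φ₀(ĥ, δ)`, regardless of the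
data-generating distribution. -/
theorem constrained_learning_general
    {𝓧 : Type*} [MeasurableSpace 𝓧] (P : Measure (𝓧 × Bool)) [IsProbabilityMeasure P]
    (n : ℕ) (hn : 1 ≤ n)
    (H : Set (𝓧 → Bool))
    (R0 R1 : (𝓧 → Bool) → ℝ≥0∞)
    (Rhat0 Rhat1 : (𝓧 → Bool) → (Fin n → 𝓧 × Bool) → ℝ≥0∞)
    (phi0 phi1 : (𝓧 → Bool) → ℝ → (Fin n → 𝓧 × Bool) → ℝ≥0∞)
    (hconf0 : ∀ δ' : ℝ, 0 < δ' → δ' < 1 →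
      (Measure.pi fun _ : Fin n => P)
          {ω | ∃ h ∈ H, phi0 h δ' ω < edistE (R0 h) (Rhat0 h ω)} ≤ ENNReal.ofReal δ')
    (hconf1 : ∀ δ' : ℝ, 0 < δ' → δ' < 1 →
      (Measure.pi fun _ : Fin n => P)
          {ω | ∃ h ∈ H, phi1 h δ' ω < edistE (R1 h) (Rhat1 h ω)} ≤ ENNReal.ofReal δ')
    (α : ℝ) (hα0 : 0 < α) (hα1 : α < 1)
    (δ : ℝ) (hδ : 0 < δ)
    (hstar : 𝓧 → Bool) (hstar_mem : hstar ∈ H)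
    (hstar_feas : R0 hstar ≤ ENNReal.ofReal α)
    (hstar_min : ∀ h ∈ H, R0 h ≤ ENNReal.ofReal α → R1 hstar ≤ R1 h)
    (hhat : (Fin n → 𝓧 × Bool) → (𝓧 → Bool))
    (hhat_mem : ∀ ω, hhat ω ∈ H)
    (hhat_feas : ∀ ω, Rhat0 (hhat ω) ω ≤ ENNReal.ofReal α + phi0 (hhat ω) δ ω)
    (hhat_min : ∀ ω, ∀ h ∈ H, Rhat0 h ω ≤ ENNReal.ofReal α + phi0 h δ ω →
      Rhat1 (hhat ω) ω + phi1 (hhat ω) δ ω ≤ Rhat1 h ω + phi1 h δ ω) :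
    ENNReal.ofReal (1 - 2 * δ) ≤
      (Measure.pi fun _ : Fin n => P)
        {ω | R1 (hhat ω) ≤ R1 hstar + 2 * phi1 hstar δ ω ∧
          R0 (hhat ω) ≤ ENNReal.ofReal α + 2 * phi0 (hhat ω) δ ω} := by
  by_cases hδhalf : (1:ℝ) ≤ 2 * δ
  · rw [ENNReal.ofReal_eq_zero.2 (by linarith)]; exact zero_le
  push_neg at hδhalf
  have hδ1 : δ < 1 := by linarith
  set μ := (Measure.pi fun _ : Fin n => P)
  have : IsProbabilityMeasure μ := MeasureTheory.Measure.pi.instIsProbabilityMeasure _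
  set B0 := {ω | ∃ h ∈ H, phi0 h δ ω < edistE (R0 h) (Rhat0 h ω)} with hB0
  set B1 := {ω | ∃ h ∈ H, phi1 h δ ω < edistE (R1 h) (Rhat1 h ω)} with hB1
  set T := {ω | R1 (hhat ω) ≤ R1 hstar + 2 * phi1 hstar δ ω ∧
          R0 (hhat ω) ≤ ENNReal.ofReal α + 2 * phi0 (hhat ω) δ ω} with hT
  -- good event is contained in T
  have hsub : (B0 ∪ B1)ᶜ ⊆ T := by
    intro ω hω
    simp only [Set.mem_compl_iff, Set.mem_union, hB0, hB1, Set.mem_setOf_eq, not_or,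
      not_exists, not_lt] at hω
    obtain ⟨hg0, hg1⟩ := hω
    have hg0 : ∀ h ∈ H, edistE (R0 h) (Rhat0 h ω) ≤ phi0 h δ ω :=
      fun h hh => le_of_not_gt (fun hl => hg0 h ⟨hh, hl⟩)
    have hg1 : ∀ h ∈ H, edistE (R1 h) (Rhat1 h ω) ≤ phi1 h δ ω :=
      fun h hh => le_of_not_gt (fun hl => hg1 h ⟨hh, hl⟩)
    -- deviation bounds
    have dev0a : ∀ h ∈ H, R0 h ≤ Rhat0 h ω + phi0 h δ ω := by
      intro h hh
      have := le_trans (le_sup_left : R0 h - Rhat0 h ω ≤ edistE (R0 h) (Rhat0 h ω))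
        (hg0 h hh)
      exact tsub_le_iff_left.mp this
    have dev0b : ∀ h ∈ H, Rhat0 h ω ≤ R0 h + phi0 h δ ω := by
      intro h hh
      have := le_trans (le_sup_right : Rhat0 h ω - R0 h ≤ edistE (R0 h) (Rhat0 h ω))
        (hg0 h hh)
      exact tsub_le_iff_left.mp this
    have dev1a : ∀ h ∈ H, R1 h ≤ Rhat1 h ω + phi1 h δ ω := by
      intro h hh
      have := le_trans (le_sup_left : R1 h - Rhat1 h ω ≤ edistE (R1 h) (Rhat1 h ω))
        (hg1 h hh)
      exact tsub_le_iff_left.mp this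
    have dev1b : ∀ h ∈ H, Rhat1 h ω ≤ R1 h + phi1 h δ ω := by
      intro h hh
      have := le_trans (le_sup_right : Rhat1 h ω - R1 h ≤ edistE (R1 h) (Rhat1 h ω))
        (hg1 h hh)
      exact tsub_le_iff_left.mp this
    constructor
    · -- excess risk bound
      have hfeas : Rhat0 hstar ω ≤ ENNReal.ofReal α + phi0 hstar δ ω :=
        le_trans (dev0b hstar hstar_mem) (add_le_add_left hstar_feas _)
      have hmin := hhat_min ω hstar hstar_mem hfeas
      calc R1 (hhat ω) ≤ Rhat1 (hhat ω) ω + phi1 (hhat ω) δ ω :=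
            dev1a _ (hhat_mem ω)
        _ ≤ Rhat1 hstar ω + phi1 hstar δ ω := hmin
        _ ≤ (R1 hstar + phi1 hstar δ ω) + phi1 hstar δ ω :=
            add_le_add_left (dev1b hstar hstar_mem) _
        _ = R1 hstar + 2 * phi1 hstar δ ω := by ring
    · -- approximate feasibility
      calc R0 (hhat ω) ≤ Rhat0 (hhat ω) ω + phi0 (hhat ω) δ ω :=
            dev0a _ (hhat_mem ω)
        _ ≤ (ENNReal.ofReal α + phi0 (hhat ω) δ ω) + phi0 (hhat ω) δ ω :=
            add_le_add_left (hhat_feas ω) _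
        _ = ENNReal.ofReal α + 2 * phi0 (hhat ω) δ ω := by ring
  -- probability bound
  have h0 := hconf0 δ hδ hδ1
  have h1 := hconf1 δ hδ hδ1
  have hunion : μ (B0 ∪ B1) ≤ ENNReal.ofReal (2 * δ) := by
    calc μ (B0 ∪ B1) ≤ μ B0 + μ B1 := measure_union_le _ _
      _ ≤ ENNReal.ofReal δ + ENNReal.ofReal δ := add_le_add h0 h1
      _ = ENNReal.ofReal (2 * δ) := by
          rw [← ENNReal.ofReal_add hδ.le hδ.le]; ring_nf
  have hone : (1 : ℝ≥0∞) ≤ μ (B0 ∪ B1)ᶜ + ENNReal.ofReal (2 * δ) := by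
    calc (1 : ℝ≥0∞) = μ Set.univ := (measure_univ).symm
      _ = μ ((B0 ∪ B1)ᶜ ∪ (B0 ∪ B1)) := by rw [Set.compl_union_self]
      _ ≤ μ (B0 ∪ B1)ᶜ + μ (B0 ∪ B1) := measure_union_le _ _
      _ ≤ μ (B0 ∪ B1)ᶜ + ENNReal.ofReal (2 * δ) := add_le_add_right hunion _
  calc ENNReal.ofReal (1 - 2 * δ)
      = 1 - ENNReal.ofReal (2 * δ) := by
        rw [ENNReal.ofReal_sub _ (by linarith), ENNReal.ofReal_one]
    _ ≤ μ (B0 ∪ B1)ᶜ := tsub_le_iff_right.mpr hone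
    _ ≤ μ T := measure_mono hsub
end

section
/- Let ℋ be countable with codelengths satisfying the Kraft inequality, fix 0 < α < 1, let h* := argmin_{h∈ℋ} R_ND(h) subject to R_D(h) ≤ α, and let ĥ := argmin_{h∈ℋ} R̂_ND(h) + φ_ND(h, δ) subject to R̂_D(h) ≤ α + φ_D(h, δ). Then for any δ > 0 and any n ≥ 1, with probability at least 1 − 2δ over the draw of the training data, both R_ND(ĥ) ≤ R_ND(h*) + 2 φ_ND(h*, δ) and R_D(ĥ) ≤ α + 2 φ_D(ĥ, δ). -/
open MeasureTheory ENNReal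
open Real Finset

/-- Hoeffding's lemma for Bernoulli mgf, `s ≥ 0` case. -/
lemma bern_hoeffding {q s : ℝ} (hq0 : 0 ≤ q) (hq1 : q ≤ 1) (hs : 0 ≤ s) :
    1 - q + q * Real.exp s ≤ Real.exp (q * s + s ^ 2 / 8) := by
  have hd : ∀ x : ℝ, 0 < 1 - q + q * Real.exp x := by
    intro x
    rcases le_or_gt 0 x with hx | hx
    · nlinarith [Real.one_le_exp hx, Real.exp_pos x]
    · nlinarith [Real.exp_pos x, (Real.exp_lt_one_iff.2 hx)]
  set d : ℝ → ℝ := fun x => 1 - q + q * Real.exp x with hdef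
  set φ : ℝ → ℝ := fun x => q * x + x ^ 2 / 8 - Real.log (d x) with hφ
  set φ' : ℝ → ℝ := fun x => q + x / 4 - q * Real.exp x / d x with hφ'
  have hderiv : ∀ x, HasDerivAt φ (φ' x) x := by
    intro x
    have h1 : HasDerivAt d (q * Real.exp x) x := by
      exact ((Real.hasDerivAt_exp x).const_mul q).const_add (1 - q)
    have h2 : HasDerivAt (fun y => Real.log (d y)) (q * Real.exp x / d x) x :=
      h1.log (hd x).ne'
    have h3 : HasDerivAt (fun y : ℝ => q * y + y ^ 2 / 8) (q + 2 * x / 8) x := by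
      refine (((hasDerivAt_id x).const_mul q).add
        (((hasDerivAt_pow 2 x)).div_const 8)).congr_deriv ?_
      simp
    have : HasDerivAt φ (q + 2 * x / 8 - q * Real.exp x / d x) x := h3.sub h2
    convert this using 1
    ring
  have hderiv' : ∀ x, HasDerivAt φ' (1/4 - q * Real.exp x * (1 - q) / (d x)^2) x := by
    intro x
    have h1 : HasDerivAt d (q * Real.exp x) x := by
      exact ((Real.hasDerivAt_exp x).const_mul q).const_add (1 - q)
    have h2 : HasDerivAt (fun y => q * Real.exp y) (q * Real.exp x) x :=
      (Real.hasDerivAt_exp x).const_mul q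
    have h3 : HasDerivAt (fun y => q * Real.exp y / d y)
        ((q * Real.exp x * d x - q * Real.exp x * (q * Real.exp x)) / (d x)^2) x :=
      h2.div h1 (hd x).ne'
    have h4 : HasDerivAt (fun y : ℝ => q + y / 4) (1/4) x := by
      simpa using ((hasDerivAt_id x).div_const 4).const_add q
    have : HasDerivAt φ' (1/4 - (q * Real.exp x * d x - q * Real.exp x * (q * Real.exp x)) / (d x)^2) x :=
      h4.sub h3
    convert this using 1
    have hdx := (hd x).ne'
    field_simp
    ring
  have hmono' : Monotone φ' := by
    apply monotone_of_deriv_nonneg (fun x => (hderiv' x).differentiableAt)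
    intro x
    rw [(hderiv' x).deriv]
    have hdx := hd x
    rw [sub_nonneg, div_le_iff₀ (by positivity)]
    have hu : 0 ≤ q * Real.exp x := by positivity
    have : d x = (1 - q) + q * Real.exp x := rfl
    nlinarith [sq_nonneg (d x - 2 * (q * Real.exp x)), Real.exp_pos x]
  have hφ'0 : φ' 0 = 0 := by
    simp only [hφ']
    have : d 0 = 1 := by simp [hdef]
    rw [this]
    simp
  have hφ'nonneg : ∀ x ∈ Set.Ici (0:ℝ), 0 ≤ φ' x := fun x hx => hφ'0 ▸ hmono' hx
  have hmono : MonotoneOn φ (Set.Ici 0) := by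
    apply monotoneOn_of_deriv_nonneg (convex_Ici 0)
      (fun x _ => (hderiv x).continuousAt.continuousWithinAt)
      (fun x _ => (hderiv x).differentiableAt.differentiableWithinAt)
    intro x hx
    rw [(hderiv x).deriv]
    exact hφ'nonneg x (le_of_lt (by simpa using hx))
  have hφ0 : φ 0 = 0 := by
    have : d 0 = 1 := by simp [hdef]
    simp [hφ, this]
  have hφs : 0 ≤ φ s := by
    have := hmono (Set.mem_Ici.2 le_rfl) (Set.mem_Ici.2 hs) hs
    rwa [hφ0] at this
  simp only [hφ] at hφs
  have hlog : Real.log (d s) ≤ q * s + s ^ 2 / 8 := by linarith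
  have : d s ≤ Real.exp (q * s + s^2/8) := by
    have h2 : 0 < d s := hd s
    rw [← Real.exp_log h2]
    exact Real.exp_le_exp.2 hlog
  exact this



lemma powerset_sum_eq {ι : Type*} [DecidableEq ι] (A : Finset ι) (x y : ℝ) :
    ∑ B ∈ A.powerset, x ^ B.card * y ^ (A.card - B.card) = (x + y) ^ A.card := by
  have h := Finset.prod_add (fun _ : ι => x) (fun _ : ι => y) A
  rw [Finset.prod_const] at h
  rw [h]
  apply Finset.sum_congr rfl
  intro B hB
  rw [Finset.mem_powerset] at hB
  rw [Finset.prod_const, Finset.prod_const, Finset.card_sdiff_of_subset hB]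

lemma binom_tail_up {ι : Type*} [DecidableEq ι] (A : Finset ι)
    (b a t : ℝ) (hb : 0 ≤ b) (hba : b ≤ a) (ha : 0 < a) (ht : 0 < t) :
    ∑ B ∈ A.powerset.filter
        (fun B => (A.card : ℝ) * (b / a) + A.card * t ≤ (B.card : ℝ)),
      b ^ B.card * (a - b) ^ (A.card - B.card)
      ≤ a ^ A.card * Real.exp (-(2 * A.card * t ^ 2)) := by
  classical
  set k := A.card with hk
  set q := b / a with hq
  set s := 4 * t with hs
  have hs0 : 0 ≤ s := by positivity
  have hq0 : 0 ≤ q := by positivity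
  have hq1 : q ≤ 1 := by rw [hq, div_le_one ha]; exact hba
  have hab : 0 ≤ a - b := by linarith
  set w : Finset ι → ℝ := fun B =>
    Real.exp (-(s * ((k : ℝ) * q + k * t))) *
      ((b * Real.exp s) ^ B.card * (a - b) ^ (k - B.card)) with hw
  have hwnn : ∀ B, 0 ≤ w B := by
    intro B
    have := Real.exp_pos s
    positivity
  have step1 : ∑ B ∈ A.powerset.filter
        (fun B => (k : ℝ) * q + k * t ≤ (B.card : ℝ)),
      b ^ B.card * (a - b) ^ (k - B.card) ≤ ∑ B ∈ A.powerset, w B := by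
    calc ∑ B ∈ A.powerset.filter
          (fun B => (k : ℝ) * q + k * t ≤ (B.card : ℝ)),
        b ^ B.card * (a - b) ^ (k - B.card)
        ≤ ∑ B ∈ A.powerset.filter
          (fun B => (k : ℝ) * q + k * t ≤ (B.card : ℝ)), w B := by
          apply Finset.sum_le_sum
          intro B hB
          rw [Finset.mem_filter] at hB
          have hcond := hB.2
          simp only [hw]
          have hexp : (b * Real.exp s) ^ B.card = b ^ B.card * Real.exp (s * B.card) := by
            rw [mul_pow, ← Real.exp_nat_mul]
            ring_nf
          rw [hexp]
          have key : 1 ≤ Real.exp (-(s * ((k : ℝ) * q + k * t))) * Real.exp (s * B.card) := by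
            rw [← Real.exp_add]
            apply Real.one_le_exp
            nlinarith
          nlinarith [pow_nonneg hb B.card, pow_nonneg hab (k - B.card),
            mul_nonneg (pow_nonneg hb B.card) (pow_nonneg hab (k - B.card))]
      _ ≤ ∑ B ∈ A.powerset, w B :=
          Finset.sum_le_sum_of_subset_of_nonneg (Finset.filter_subset _ _)
            (fun B _ _ => hwnn B)
  have step2 : ∑ B ∈ A.powerset, w B =
      Real.exp (-(s * ((k : ℝ) * q + k * t))) * (b * Real.exp s + (a - b)) ^ k := by
    rw [hw, ← Finset.mul_sum, powerset_sum_eq]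
  have step3 : b * Real.exp s + (a - b) ≤ a * Real.exp (q * s + s ^ 2 / 8) := by
    have hbern := bern_hoeffding hq0 hq1 hs0
    have haq : a * q = b := by rw [hq]; field_simp
    nlinarith [Real.exp_pos s, Real.exp_pos (q * s + s^2/8)]
  have step4 : (b * Real.exp s + (a - b)) ^ k ≤
      (a * Real.exp (q * s + s ^ 2 / 8)) ^ k := by
    apply pow_le_pow_left₀ _ step3
    nlinarith [Real.exp_pos s]
  have step5 : Real.exp (-(s * ((k : ℝ) * q + k * t))) *
      (a * Real.exp (q * s + s ^ 2 / 8)) ^ k = a ^ k * Real.exp (-(2 * k * t ^ 2)) := by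
    rw [mul_pow, ← Real.exp_nat_mul, ← mul_assoc, mul_comm _ (a ^ k), mul_assoc,
      ← Real.exp_add]
    congr 1
    rw [hs]
    push_cast
    ring
  calc ∑ B ∈ A.powerset.filter
        (fun B => (k : ℝ) * q + k * t ≤ (B.card : ℝ)),
      b ^ B.card * (a - b) ^ (k - B.card)
      ≤ ∑ B ∈ A.powerset, w B := step1
    _ = Real.exp (-(s * ((k : ℝ) * q + k * t))) * (b * Real.exp s + (a - b)) ^ k := step2
    _ ≤ Real.exp (-(s * ((k : ℝ) * q + k * t))) *
        (a * Real.exp (q * s + s ^ 2 / 8)) ^ k := by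
        apply mul_le_mul_of_nonneg_left step4 (Real.exp_pos _).le
    _ = a ^ k * Real.exp (-(2 * k * t ^ 2)) := step5

lemma binom_tail_down {ι : Type*} [DecidableEq ι] (A : Finset ι)
    (b a t : ℝ) (hb : 0 ≤ b) (hba : b ≤ a) (ha : 0 < a) (ht : 0 < t) :
    ∑ B ∈ A.powerset.filter
        (fun B => (B.card : ℝ) ≤ (A.card : ℝ) * (b / a) - A.card * t),
      b ^ B.card * (a - b) ^ (A.card - B.card)
      ≤ a ^ A.card * Real.exp (-(2 * A.card * t ^ 2)) := by
  classical
  have key := binom_tail_up A (a - b) a t (by linarith) (by linarith) ha ht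
  have hsub : a - (a - b) = b := by ring
  rw [hsub] at key
  refine le_trans (le_of_eq ?_) key
  apply Finset.sum_nbij' (fun B => A \ B) (fun B => A \ B)
  · intro B hB
    rw [Finset.mem_filter, Finset.mem_powerset] at hB ⊢
    obtain ⟨hBA, hcond⟩ := hB
    refine ⟨Finset.sdiff_subset, ?_⟩
    rw [Finset.card_sdiff_of_subset hBA]
    have hle := Finset.card_le_card hBA
    have : ((A.card - B.card : ℕ) : ℝ) = (A.card : ℝ) - B.card := by
      push_cast [Nat.cast_sub hle]; ring
    rw [this]
    have hq : (A.card : ℝ) * ((a - b) / a) = A.card - A.card * (b / a) := by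
      field_simp
    rw [hq]
    linarith
  · intro B hB
    rw [Finset.mem_filter, Finset.mem_powerset] at hB ⊢
    obtain ⟨hBA, hcond⟩ := hB
    refine ⟨Finset.sdiff_subset, ?_⟩
    rw [Finset.card_sdiff_of_subset hBA]
    have hle := Finset.card_le_card hBA
    have : ((A.card - B.card : ℕ) : ℝ) = (A.card : ℝ) - B.card := by
      push_cast [Nat.cast_sub hle]; ring
    rw [this]
    have hq : (A.card : ℝ) * ((a - b) / a) = A.card - A.card * (b / a) := by
      field_simp
    rw [hq] at hcond
    linarith
  · intro B hB
    rw [Finset.mem_filter, Finset.mem_powerset] at hB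
    exact Finset.sdiff_sdiff_eq_self hB.1
  · intro B hB
    rw [Finset.mem_filter, Finset.mem_powerset] at hB
    exact Finset.sdiff_sdiff_eq_self hB.1
  · intro B hB
    rw [Finset.mem_filter, Finset.mem_powerset] at hB
    obtain ⟨hBA, _⟩ := hB
    rw [Finset.card_sdiff_of_subset hBA]
    have hle := Finset.card_le_card hBA
    rw [Nat.sub_sub_self hle, mul_comm]



open Classical in
noncomputable def cnt {Z : Type*} {n : ℕ} (E : Set Z) (ω : Fin n → Z) : ℕ :=
  (Finset.univ.filter fun i => ω i ∈ E).card

noncomputable def eRhat {Z : Type*} {n : ℕ} (E F : Set Z) (ω : Fin n → Z) : ℝ≥0∞ :=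
  if 0 < cnt E ω then (cnt F ω : ℝ≥0∞) / (cnt E ω : ℝ≥0∞) else ⊤

noncomputable def eR {Z : Type*} [MeasurableSpace Z] (μ : Measure Z) (E F : Set Z) : ℝ≥0∞ :=
  if 0 < μ E then μ F / μ E else ⊤

section conc
variable {Z : Type*} [MeasurableSpace Z]

/-- The key concentration lemma: a bad event of small probability outside of which the
empirical conditional rate is within `pen` of the true conditional rate. -/
lemma conc_good (μ : Measure Z) [IsProbabilityMeasure μ]
    (E F : Set Z) (hE : MeasurableSet E) (hF : MeasurableSet F) (hFE : F ⊆ E)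
    (n : ℕ) (c δ : ℝ) (hc : 0 ≤ c) (hδ : 0 < δ) (hδ2 : δ < 2) :
    ∃ B : Set (Fin n → Z), MeasurableSet B ∧
      (Measure.pi fun _ : Fin n => μ) B ≤ ENNReal.ofReal (δ * 2 ^ (-c)) ∧
      ∀ ω ∉ B,
        eRhat E F ω ≤ eR μ E F + pen c δ (cnt E ω) ∧
        eR μ E F ≤ eRhat E F ω + pen c δ (cnt E ω) := by
  classical
  rcases eq_or_ne (μ E) 0 with hμE | hμE
  · -- degenerate case: E is null
    refine ⟨⋃ i : Fin n, (fun ω => ω i) ⁻¹' E, ?_, ?_, ?_⟩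
    · exact MeasurableSet.iUnion fun i => (measurable_pi_apply i) hE
    · have hnull : ∀ i : Fin n,
          (Measure.pi fun _ : Fin n => μ) ((fun ω => ω i) ⁻¹' E) = 0 := by
        intro i
        have : ((fun ω : Fin n → Z => ω i) ⁻¹' E) =
            Set.pi Set.univ (fun j => if j = i then E else Set.univ) := by
          ext ω
          simp only [Set.mem_preimage, Set.mem_pi, Set.mem_univ, true_implies]
          constructor
          · intro hωi j
            by_cases hj : j = i
            · subst hj; simpa using hωi
            · simp [hj]
          · intro hall
            have := hall i
            simpa using this
        rw [this, Measure.pi_pi]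
        apply Finset.prod_eq_zero (Finset.mem_univ i)
        simpa using hμE
      calc (Measure.pi fun _ : Fin n => μ) (⋃ i : Fin n, (fun ω => ω i) ⁻¹' E)
          ≤ ∑' i : Fin n, (Measure.pi fun _ : Fin n => μ) ((fun ω => ω i) ⁻¹' E) :=
            measure_iUnion_le _
        _ = 0 := by simp [hnull]
        _ ≤ _ := zero_le
    · intro ω hω
      have hcnt : cnt E ω = 0 := by
        rw [cnt, Finset.card_eq_zero, Finset.filter_eq_empty_iff]
        intro i _
        intro hmem
        exact hω (Set.mem_iUnion.2 ⟨i, hmem⟩)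
      have hpen : pen c δ (cnt E ω) = ⊤ := by simp [pen, hcnt]
      constructor
      · rw [hpen, add_top]; exact le_top
      · rw [hpen, add_top]; exact le_top
  · -- main case : μ E ≠ 0
    have hμEtop : μ E ≠ ⊤ := (lt_of_le_of_lt prob_le_one one_lt_top).ne
    have hμFtop : μ F ≠ ⊤ := (lt_of_le_of_lt prob_le_one one_lt_top).ne
    set a := (μ E).toReal with ha
    set bF := (μ F).toReal with hbFdef
    have ha0 : 0 < a := ENNReal.toReal_pos hμE hμEtop
    have ha1 : a ≤ 1 := by
      rw [ha]
      exact ENNReal.toReal_le_of_le_ofReal one_pos.le (by simpa using prob_le_one)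
    have hbF0 : 0 ≤ bF := ENNReal.toReal_nonneg
    have hbFa : bF ≤ a := ENNReal.toReal_mono hμEtop (measure_mono hFE)
    have hofE : μ E = ENNReal.ofReal a := (ENNReal.ofReal_toReal hμEtop).symm
    have hofF : μ F = ENNReal.ofReal bF := (ENNReal.ofReal_toReal hμFtop).symm
    set q := bF / a with hq
    have hq0 : 0 ≤ q := by positivity
    set L := c * Real.log 2 + Real.log (2 / δ) with hL
    have hLpos : 0 < L := by
      have h2δ : 1 < 2 / δ := (one_lt_div hδ).2 hδ2
      have h1 := Real.log_pos h2δ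
      have hlog2 : 0 < Real.log 2 := Real.log_pos one_lt_two
      rw [hL]
      nlinarith [mul_nonneg hc hlog2.le]
    set t : ℕ → ℝ := fun m => Real.sqrt (L / (2 * m)) with htdef
    have htnn : ∀ m, 0 ≤ t m := fun m => Real.sqrt_nonneg _
    have htpos : ∀ m : ℕ, 0 < m → 0 < t m := by
      intro m hm
      apply Real.sqrt_pos.2
      positivity
    have htsq : ∀ m : ℕ, 0 < m → Real.exp (-(2 * (m : ℝ) * (t m) ^ 2)) = Real.exp (-L) := by
      intro m hm
      congr 1
      rw [htdef]
      rw [Real.sq_sqrt (by positivity)]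
      have hm' : (0:ℝ) < m := by exact_mod_cast hm
      field_simp
    -- atoms
    set cell : Finset (Fin n) → Finset (Fin n) → Fin n → Set Z := fun A B i =>
      if i ∈ B then F else if i ∈ A then E \ F else Eᶜ with hcell
    set atom : Finset (Fin n) → Finset (Fin n) → Set (Fin n → Z) := fun A B =>
      Set.pi Set.univ (cell A B) with hatom
    have hcellmeas : ∀ A B i, MeasurableSet (cell A B i) := by
      intro A B i
      rw [hcell]
      dsimp only
      split_ifs
      · exact hF
      · exact hE.diff hF
      · exact hE.compl
    have hatommeas : ∀ A B, MeasurableSet (atom A B) := fun A B =>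
      MeasurableSet.univ_pi (hcellmeas A B)
    have hμEF : μ (E \ F) = ENNReal.ofReal (a - bF) := by
      rw [measure_diff hFE hF.nullMeasurableSet hμFtop, hofE, hofF,
        ENNReal.ofReal_sub a hbF0]
    have hμEc : μ Eᶜ = ENNReal.ofReal (1 - a) := by
      rw [prob_compl_eq_one_sub hE, hofE, ← ENNReal.ofReal_one,
        ENNReal.ofReal_sub 1 (ENNReal.toReal_nonneg)]
    have hatomμ : ∀ A B : Finset (Fin n), B ⊆ A →
        (Measure.pi fun _ : Fin n => μ) (atom A B) =
          ENNReal.ofReal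
            (bF ^ B.card * (a - bF) ^ (A.card - B.card) * (1 - a) ^ (n - A.card)) := by
      intro A B hBA
      rw [hatom]
      dsimp only
      rw [Measure.pi_pi]
      have hsplit1 : (Finset.univ : Finset (Fin n)) = Finset.univ := rfl
      have h1 : ∀ i ∈ B, μ (cell A B i) = ENNReal.ofReal bF := by
        intro i hi
        rw [hcell]; dsimp only; rw [if_pos hi]; exact hofF
      have h2 : ∀ i ∈ A \ B, μ (cell A B i) = ENNReal.ofReal (a - bF) := by
        intro i hi
        rw [Finset.mem_sdiff] at hi
        rw [hcell]; dsimp only; rw [if_neg hi.2, if_pos hi.1]; exact hμEF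
      have h3 : ∀ i ∈ Finset.univ \ A, μ (cell A B i) = ENNReal.ofReal (1 - a) := by
        intro i hi
        rw [Finset.mem_sdiff] at hi
        have hiB : i ∉ B := fun h => hi.2 (hBA h)
        rw [hcell]; dsimp only; rw [if_neg hiB, if_neg hi.2]; exact hμEc
      rw [← Finset.prod_sdiff (Finset.subset_univ A), ← Finset.prod_sdiff hBA]
      rw [Finset.prod_congr rfl h1, Finset.prod_congr rfl h2, Finset.prod_congr rfl h3]
      rw [Finset.prod_const, Finset.prod_const, Finset.prod_const,
        Finset.card_sdiff_of_subset hBA, Finset.card_sdiff_of_subset (Finset.subset_univ A), Finset.card_univ,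
        Fintype.card_fin]
      rw [← ENNReal.ofReal_pow hbF0, ← ENNReal.ofReal_pow (by linarith : (0:ℝ) ≤ a - bF),
        ← ENNReal.ofReal_pow (by linarith : (0:ℝ) ≤ 1 - a),
        ← ENNReal.ofReal_mul (pow_nonneg (by linarith : (0:ℝ) ≤ a - bF) _),
        ← ENNReal.ofReal_mul (pow_nonneg (by linarith : (0:ℝ) ≤ 1 - a) _)]
      congr 1
      ring
    -- the bad sets
    set BadU : Set (Fin n → Z) :=
      ⋃ A ∈ (Finset.univ : Finset (Fin n)).powerset.filter (fun A => A ≠ ∅),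
        ⋃ B ∈ A.powerset.filter
          (fun B => (A.card : ℝ) * (bF / a) + A.card * t A.card ≤ (B.card : ℝ)),
          atom A B with hBadU
    set BadD : Set (Fin n → Z) :=
      ⋃ A ∈ (Finset.univ : Finset (Fin n)).powerset.filter (fun A => A ≠ ∅),
        ⋃ B ∈ A.powerset.filter
          (fun B => (B.card : ℝ) ≤ (A.card : ℝ) * (bF / a) - A.card * t A.card),
          atom A B with hBadD
    have hBadUmeas : MeasurableSet BadU := by
      rw [hBadU]
      exact Finset.measurableSet_biUnion _ fun A _ =>
        Finset.measurableSet_biUnion _ fun B _ => hatommeas A B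
    have hBadDmeas : MeasurableSet BadD := by
      rw [hBadD]
      exact Finset.measurableSet_biUnion _ fun A _ =>
        Finset.measurableSet_biUnion _ fun B _ => hatommeas A B
    -- measure bound for a generic bad set
    have hbound : ∀ (cond : Finset (Fin n) → Finset (Fin n) → Prop)
        (inst : ∀ A B, Decidable (cond A B)),
        (∀ A : Finset (Fin n), A ≠ ∅ →
          ∑ B ∈ A.powerset.filter (cond A),
            bF ^ B.card * (a - bF) ^ (A.card - B.card)
            ≤ a ^ A.card * Real.exp (-L)) →
        (Measure.pi fun _ : Fin n => μ)
          (⋃ A ∈ (Finset.univ : Finset (Fin n)).powerset.filter (fun A => A ≠ ∅),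
            ⋃ B ∈ A.powerset.filter (cond A), atom A B)
          ≤ ENNReal.ofReal (Real.exp (-L)) := by
      intro cond inst hsum
      refine le_trans (measure_biUnion_finset_le _ _)
        (le_trans (Finset.sum_le_sum fun A _ => measure_biUnion_finset_le _ _) ?_)
      calc ∑ A ∈ (Finset.univ : Finset (Fin n)).powerset.filter (fun A => A ≠ ∅),
            ∑ B ∈ A.powerset.filter (cond A),
              (Measure.pi fun _ : Fin n => μ) (atom A B)
          = ∑ A ∈ (Finset.univ : Finset (Fin n)).powerset.filter (fun A => A ≠ ∅),
            ∑ B ∈ A.powerset.filter (cond A),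
              ENNReal.ofReal
                (bF ^ B.card * (a - bF) ^ (A.card - B.card) * (1 - a) ^ (n - A.card)) := by
            apply Finset.sum_congr rfl
            intro A hA
            apply Finset.sum_congr rfl
            intro B hB
            rw [Finset.mem_filter, Finset.mem_powerset] at hB
            exact hatomμ A B hB.1
        _ = ENNReal.ofReal
            (∑ A ∈ (Finset.univ : Finset (Fin n)).powerset.filter (fun A => A ≠ ∅),
              ∑ B ∈ A.powerset.filter (cond A),
                bF ^ B.card * (a - bF) ^ (A.card - B.card) * (1 - a) ^ (n - A.card)) := by
            rw [ENNReal.ofReal_sum_of_nonneg]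
            · apply Finset.sum_congr rfl
              intro A _
              rw [ENNReal.ofReal_sum_of_nonneg]
              intro B _
              have h1 : 0 ≤ a - bF := by linarith
              have h2 : 0 ≤ 1 - a := by linarith
              exact mul_nonneg (mul_nonneg (pow_nonneg hbF0 _) (pow_nonneg h1 _))
                (pow_nonneg h2 _)
            · intro A _
              apply Finset.sum_nonneg
              intro B _
              have h1 : 0 ≤ a - bF := by linarith
              have h2 : 0 ≤ 1 - a := by linarith
              exact mul_nonneg (mul_nonneg (pow_nonneg hbF0 _) (pow_nonneg h1 _))
                (pow_nonneg h2 _)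
        _ ≤ ENNReal.ofReal (Real.exp (-L)) := by
            apply ENNReal.ofReal_le_ofReal
            have h2 : 0 ≤ 1 - a := by linarith
            calc ∑ A ∈ (Finset.univ : Finset (Fin n)).powerset.filter (fun A => A ≠ ∅),
                ∑ B ∈ A.powerset.filter (cond A),
                  bF ^ B.card * (a - bF) ^ (A.card - B.card) * (1 - a) ^ (n - A.card)
                ≤ ∑ A ∈ (Finset.univ : Finset (Fin n)).powerset.filter (fun A => A ≠ ∅),
                  (a ^ A.card * Real.exp (-L)) * (1 - a) ^ (n - A.card) := by
                  apply Finset.sum_le_sum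
                  intro A hA
                  rw [Finset.mem_filter] at hA
                  have hinner := hsum A hA.2
                  calc ∑ B ∈ A.powerset.filter (cond A),
                      bF ^ B.card * (a - bF) ^ (A.card - B.card) * (1 - a) ^ (n - A.card)
                      = (∑ B ∈ A.powerset.filter (cond A),
                          bF ^ B.card * (a - bF) ^ (A.card - B.card)) *
                          (1 - a) ^ (n - A.card) := by
                        rw [Finset.sum_mul]
                    _ ≤ (a ^ A.card * Real.exp (-L)) * (1 - a) ^ (n - A.card) := by
                        apply mul_le_mul_of_nonneg_right hinner (pow_nonneg h2 _)
              _ ≤ ∑ A ∈ (Finset.univ : Finset (Fin n)).powerset,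
                  (a ^ A.card * Real.exp (-L)) * (1 - a) ^ (n - A.card) := by
                  apply Finset.sum_le_sum_of_subset_of_nonneg (Finset.filter_subset _ _)
                  intro A _ _
                  have := Real.exp_pos (-L)
                  positivity
              _ = Real.exp (-L) *
                  ∑ A ∈ (Finset.univ : Finset (Fin n)).powerset,
                    a ^ A.card * (1 - a) ^ ((Finset.univ : Finset (Fin n)).card - A.card) := by
                  rw [Finset.mul_sum]
                  apply Finset.sum_congr rfl
                  intro A _
                  rw [Finset.card_univ, Fintype.card_fin]
                  ring
              _ = Real.exp (-L) := by
                  rw [powerset_sum_eq]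
                  norm_num
    have hBadUle : (Measure.pi fun _ : Fin n => μ) BadU ≤ ENNReal.ofReal (Real.exp (-L)) := by
      rw [hBadU]
      refine hbound _ _ ?_
      intro A hA
      have hApos : 0 < A.card := Finset.card_pos.2 (Finset.nonempty_iff_ne_empty.2 hA)
      have hbin := binom_tail_up A bF a (t A.card) hbF0 hbFa ha0 (htpos _ hApos)
      rw [htsq _ hApos] at hbin
      exact hbin
    have hBadDle : (Measure.pi fun _ : Fin n => μ) BadD ≤ ENNReal.ofReal (Real.exp (-L)) := by
      rw [hBadD]
      refine hbound _ _ ?_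
      intro A hA
      have hApos : 0 < A.card := Finset.card_pos.2 (Finset.nonempty_iff_ne_empty.2 hA)
      have hbin := binom_tail_down A bF a (t A.card) hbF0 hbFa ha0 (htpos _ hApos)
      rw [htsq _ hApos] at hbin
      exact hbin
    have hexpL : Real.exp (-L) = 2 ^ (-c) * (δ / 2) := by
      rw [hL, show -(c * Real.log 2 + Real.log (2 / δ)) =
        Real.log 2 * (-c) + -Real.log (2 / δ) by ring, Real.exp_add,
        ← Real.rpow_def_of_pos (by norm_num : (0:ℝ) < 2), Real.exp_neg,
        Real.exp_log (by positivity : (0:ℝ) < 2 / δ)]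
      congr 1
      field_simp
    refine ⟨BadU ∪ BadD, hBadUmeas.union hBadDmeas, ?_, ?_⟩
    · calc (Measure.pi fun _ : Fin n => μ) (BadU ∪ BadD)
          ≤ (Measure.pi fun _ : Fin n => μ) BadU + (Measure.pi fun _ : Fin n => μ) BadD :=
            measure_union_le _ _
        _ ≤ ENNReal.ofReal (Real.exp (-L)) + ENNReal.ofReal (Real.exp (-L)) :=
            add_le_add hBadUle hBadDle
        _ = ENNReal.ofReal (Real.exp (-L) + Real.exp (-L)) :=
            (ENNReal.ofReal_add (Real.exp_pos _).le (Real.exp_pos _).le).symm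
        _ ≤ ENNReal.ofReal (δ * 2 ^ (-c)) := by
            apply ENNReal.ofReal_le_ofReal
            rw [hexpL]
            have h2c : (0:ℝ) < 2 ^ (-c) := Real.rpow_pos_of_pos (by norm_num) _
            nlinarith
    · intro ω hω
      rw [Set.mem_union] at hω
      push_neg at hω
      obtain ⟨hωU, hωD⟩ := hω
      by_cases hm : 0 < cnt E ω
      swap
      · have h0 : cnt E ω = 0 := Nat.eq_zero_of_not_pos hm
        have hpen : pen c δ (cnt E ω) = ⊤ := by simp [pen, h0]
        rw [hpen, add_top, add_top]
        exact ⟨le_top, le_top⟩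
      · set Aω := Finset.univ.filter (fun i => ω i ∈ E) with hAω
        set Bω := Finset.univ.filter (fun i => ω i ∈ F) with hBω
        have hAcard : Aω.card = cnt E ω := rfl
        have hBcard : Bω.card = cnt F ω := rfl
        have hBA : Bω ⊆ Aω := by
          intro i hi
          rw [hBω, Finset.mem_filter] at hi
          rw [hAω, Finset.mem_filter]
          exact ⟨hi.1, hFE hi.2⟩
        have hmem : ω ∈ atom Aω Bω := by
          rw [hatom]
          dsimp only
          intro i _
          rw [hcell]
          dsimp only
          split_ifs with h1 h2
          · rw [hBω, Finset.mem_filter] at h1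
            exact h1.2
          · rw [hAω, Finset.mem_filter] at h2
            refine ⟨h2.2, ?_⟩
            intro hiF
            exact h1 (by rw [hBω, Finset.mem_filter]; exact ⟨Finset.mem_univ i, hiF⟩)
          · intro hiE
            exact h2 (by rw [hAω, Finset.mem_filter]; exact ⟨Finset.mem_univ i, hiE⟩)
        have hAmem : Aω ∈ (Finset.univ : Finset (Fin n)).powerset.filter (fun A => A ≠ ∅) := by
          rw [Finset.mem_filter, Finset.mem_powerset]
          refine ⟨Finset.subset_univ _, ?_⟩
          intro habs
          rw [← hAcard, habs] at hm
          simp at hm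
        have notU : ¬((Aω.card : ℝ) * (bF / a) + Aω.card * t Aω.card ≤ (Bω.card : ℝ)) := by
          intro hcond
          apply hωU
          rw [hBadU]
          simp only [Set.mem_iUnion]
          refine ⟨Aω, hAmem, Bω, ?_, hmem⟩
          rw [Finset.mem_filter, Finset.mem_powerset]
          exact ⟨hBA, hcond⟩
        have notD : ¬((Bω.card : ℝ) ≤ (Aω.card : ℝ) * (bF / a) - Aω.card * t Aω.card) := by
          intro hcond
          apply hωD
          rw [hBadD]
          simp only [Set.mem_iUnion]
          refine ⟨Aω, hAmem, Bω, ?_, hmem⟩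
          rw [Finset.mem_filter, Finset.mem_powerset]
          exact ⟨hBA, hcond⟩
        push_neg at notU notD
        set m := cnt E ω with hmdef
        set j := cnt F ω with hjdef
        have hm' : (0:ℝ) < m := by exact_mod_cast hm
        have hμEpos : 0 < μ E := pos_iff_ne_zero.2 hμE
        have heR : eR μ E F = ENNReal.ofReal q := by
          rw [eR, if_pos hμEpos, hofE, hofF, ← ENNReal.ofReal_div_of_pos ha0]
        have heRhat : eRhat E F ω = ENNReal.ofReal ((j : ℝ) / m) := by
          rw [eRhat, if_pos hm, ← hmdef, ← hjdef, ← ENNReal.ofReal_natCast j,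
            ← ENNReal.ofReal_natCast m, ← ENNReal.ofReal_div_of_pos hm']
        have hpen : pen c δ m = ENNReal.ofReal (t m) := by
          rw [pen, if_pos hm, htdef, hL]
        have hup : (j : ℝ) < m * q + m * t m := by
          rw [hAcard, hBcard] at notU
          exact notU
        have hdown : (m : ℝ) * q - m * t m < j := by
          rw [hAcard, hBcard] at notD
          exact notD
        have htm : 0 ≤ t m := htnn m
        constructor
        · rw [heR, heRhat, hpen, ← ENNReal.ofReal_add hq0 htm]
          apply ENNReal.ofReal_le_ofReal
          rw [div_le_iff₀ hm']
          nlinarith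
        · rw [heR, heRhat, hpen, ← ENNReal.ofReal_add (by positivity) htm]
          apply ENNReal.ofReal_le_ofReal
          rw [div_add' _ _ _ (ne_of_gt hm'), le_div_iff₀ hm']
          nlinarith

end conc


section bridge

lemma card_filter_eq {α : Type*} [Fintype α] {p q : α → Prop}
    (inst1 : DecidablePred p) (inst2 : DecidablePred q) (hpq : ∀ a, p a ↔ q a) :
    (@Finset.filter _ p inst1 Finset.univ).card = (@Finset.filter _ q inst2 Finset.univ).card := by
  congr 1
  ext a
  simp only [Finset.mem_filter]
  exact and_congr Iff.rfl (hpq a)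

variable {𝓧 : Type*} {n : ℕ}

lemma nD_cnt (h : 𝓧 → Bool) (ω : Fin n → 𝓧 × Bool) :
    nD h ω = cnt {z : 𝓧 × Bool | h z.1 = true} ω :=
  card_filter_eq _ _ (fun i => Iff.rfl)

lemma nND_cnt (h : 𝓧 → Bool) (ω : Fin n → 𝓧 × Bool) :
    nND h ω = cnt {z : 𝓧 × Bool | h z.1 = false} ω :=
  card_filter_eq _ _ (fun i => Iff.rfl)

lemma numD_cnt (h : 𝓧 → Bool) (ω : Fin n → 𝓧 × Bool) :
    (Finset.univ.filter fun i => (ω i).2 = false ∧ h (ω i).1 = true).card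
      = cnt {z : 𝓧 × Bool | z.2 = false ∧ h z.1 = true} ω :=
  card_filter_eq _ _ (fun i => Iff.rfl)

lemma numND_cnt (h : 𝓧 → Bool) (ω : Fin n → 𝓧 × Bool) :
    (Finset.univ.filter fun i => (ω i).2 = true ∧ h (ω i).1 = false).card
      = cnt {z : 𝓧 × Bool | z.2 = true ∧ h z.1 = false} ω :=
  card_filter_eq _ _ (fun i => Iff.rfl)

lemma RhatD_bridge (h : 𝓧 → Bool) (ω : Fin n → 𝓧 × Bool) :
    RhatD h ω = eRhat {z : 𝓧 × Bool | h z.1 = true}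
      {z : 𝓧 × Bool | z.2 = false ∧ h z.1 = true} ω := by
  rw [RhatD, eRhat, nD_cnt, numD_cnt]

lemma RhatND_bridge (h : 𝓧 → Bool) (ω : Fin n → 𝓧 × Bool) :
    RhatND h ω = eRhat {z : 𝓧 × Bool | h z.1 = false}
      {z : 𝓧 × Bool | z.2 = true ∧ h z.1 = false} ω := by
  rw [RhatND, eRhat, nND_cnt, numND_cnt]

lemma RD_bridge [MeasurableSpace 𝓧] (P : Measure (𝓧 × Bool)) (h : 𝓧 → Bool) :
    RD P h = eR P {z : 𝓧 × Bool | h z.1 = true}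
      {z : 𝓧 × Bool | z.2 = false ∧ h z.1 = true} := rfl

lemma RND_bridge [MeasurableSpace 𝓧] (P : Measure (𝓧 × Bool)) (h : 𝓧 → Bool) :
    RND P h = eR P {z : 𝓧 × Bool | h z.1 = false}
      {z : 𝓧 × Bool | z.2 = true ∧ h z.1 = false} := rfl

end bridge

/-- **Corollary 2.** Let `H` be countable with codelengths satisfying the Kraft
inequality, let `h*` minimize `R_ND` over `{h ∈ H : R_D(h) ≤ α}` and let `ĥ` minimize
`R̂_ND + φ_ND` over `{h ∈ H : R̂_D(h) ≤ α + φ_D(h, δ)}`.  Then for any `δ > 0` and any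
`n ≥ 1`, with probability at least `1 - 2δ` over the training sample, both
`R_ND(ĥ) ≤ R_ND(h*) + 2φ_ND(h*, δ)` and `R_D(ĥ) ≤ α + 2φ_D(ĥ, δ)`. -/
theorem fdr_constrained_learning
    {𝓧 : Type*} [MeasurableSpace 𝓧] (P : Measure (𝓧 × Bool)) [IsProbabilityMeasure P]
    (H : Set (𝓧 → Bool)) (hHcount : H.Countable) (hHmeas : ∀ h ∈ H, Measurable h)
    (cl : (𝓧 → Bool) → ℝ)
    (hKraft : ∑' h : H, (2 : ℝ≥0∞) ^ (-(cl h.1)) ≤ 1)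
    (n : ℕ) (hn : 1 ≤ n)
    (α : ℝ) (hα0 : 0 < α) (hα1 : α < 1)
    (δ : ℝ) (hδ : 0 < δ)
    (hstar : 𝓧 → Bool) (hstar_mem : hstar ∈ H)
    (hstar_feas : RD P hstar ≤ ENNReal.ofReal α)
    (hstar_min : ∀ h ∈ H, RD P h ≤ ENNReal.ofReal α → RND P hstar ≤ RND P h)
    (hhat : (Fin n → 𝓧 × Bool) → (𝓧 → Bool))
    (hhat_mem : ∀ ω, hhat ω ∈ H)
    (hhat_feas : ∀ ω, RhatD (hhat ω) ω ≤
      ENNReal.ofReal α + pen (cl (hhat ω)) δ (nD (hhat ω) ω))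
    (hhat_min : ∀ ω, ∀ h ∈ H, RhatD h ω ≤ ENNReal.ofReal α + pen (cl h) δ (nD h ω) →
      RhatND (hhat ω) ω + pen (cl (hhat ω)) δ (nND (hhat ω) ω) ≤
        RhatND h ω + pen (cl h) δ (nND h ω)) :
    ENNReal.ofReal (1 - 2 * δ) ≤
      (Measure.pi fun _ : Fin n => P)
        {ω | RND P (hhat ω) ≤ RND P hstar + 2 * pen (cl hstar) δ (nND hstar ω) ∧
          RD P (hhat ω) ≤ ENNReal.ofReal α + 2 * pen (cl (hhat ω)) δ (nD (hhat ω) ω)} := by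
  classical
  by_cases hδhalf : 1 - 2 * δ ≤ 0
  · rw [ENNReal.ofReal_of_nonpos hδhalf]
    exact zero_le
  push_neg at hδhalf
  have hδ2 : δ < 2 := by linarith
  have hcl : ∀ h ∈ H, 0 ≤ cl h := by
    intro h hh
    by_contra hneg
    push_neg at hneg
    have h1 : (1 : ℝ≥0∞) < 2 ^ (-(cl h)) :=
      ENNReal.one_lt_rpow (by norm_num) (by linarith)
    have h2 : (2 : ℝ≥0∞) ^ (-(cl h)) ≤ ∑' h : H, (2 : ℝ≥0∞) ^ (-(cl h.1)) :=
      ENNReal.le_tsum (⟨h, hh⟩ : H)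
    exact absurd (le_trans h2 hKraft) (not_le.2 h1)
  have key : ∀ h ∈ H, ∃ B : Set (Fin n → 𝓧 × Bool), MeasurableSet B ∧
      (Measure.pi fun _ : Fin n => P) B ≤ (2 : ℝ≥0∞) ^ (-(cl h)) * (2 * ENNReal.ofReal δ) ∧
      ∀ ω ∉ B,
        (RhatD h ω ≤ RD P h + pen (cl h) δ (nD h ω)) ∧
        (RD P h ≤ RhatD h ω + pen (cl h) δ (nD h ω)) ∧
        (RhatND h ω ≤ RND P h + pen (cl h) δ (nND h ω)) ∧
        (RND P h ≤ RhatND h ω + pen (cl h) δ (nND h ω)) := by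
    intro h hh
    have hmeas : Measurable (fun z : 𝓧 × Bool => h z.1) := (hHmeas h hh).comp measurable_fst
    have hE1 : MeasurableSet {z : 𝓧 × Bool | h z.1 = true} :=
      hmeas (measurableSet_singleton true)
    have hE0 : MeasurableSet {z : 𝓧 × Bool | h z.1 = false} :=
      hmeas (measurableSet_singleton false)
    have hF1 : MeasurableSet {z : 𝓧 × Bool | z.2 = false ∧ h z.1 = true} :=
      (measurable_snd (measurableSet_singleton false)).inter hE1
    have hF0 : MeasurableSet {z : 𝓧 × Bool | z.2 = true ∧ h z.1 = false} :=
      (measurable_snd (measurableSet_singleton true)).inter hE0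
    obtain ⟨BD, hBDmeas, hBDle, hBDgood⟩ :=
      conc_good P {z : 𝓧 × Bool | h z.1 = true} {z : 𝓧 × Bool | z.2 = false ∧ h z.1 = true}
        hE1 hF1 (fun z hz => hz.2) n (cl h) δ (hcl h hh) hδ hδ2
    obtain ⟨BND, hBNDmeas, hBNDle, hBNDgood⟩ :=
      conc_good P {z : 𝓧 × Bool | h z.1 = false} {z : 𝓧 × Bool | z.2 = true ∧ h z.1 = false}
        hE0 hF0 (fun z hz => hz.2) n (cl h) δ (hcl h hh) hδ hδ2
    have hx : ENNReal.ofReal (δ * 2 ^ (-(cl h))) =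
        (2 : ℝ≥0∞) ^ (-(cl h)) * ENNReal.ofReal δ := by
      rw [ENNReal.ofReal_mul hδ.le, ← ENNReal.ofReal_rpow_of_pos (by norm_num : (0:ℝ) < 2)]
      rw [mul_comm]
      norm_num
    refine ⟨BD ∪ BND, hBDmeas.union hBNDmeas, ?_, ?_⟩
    · calc (Measure.pi fun _ : Fin n => P) (BD ∪ BND)
          ≤ (Measure.pi fun _ : Fin n => P) BD + (Measure.pi fun _ : Fin n => P) BND :=
            measure_union_le _ _
        _ ≤ ENNReal.ofReal (δ * 2 ^ (-(cl h))) + ENNReal.ofReal (δ * 2 ^ (-(cl h))) :=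
            add_le_add hBDle hBNDle
        _ = (2 : ℝ≥0∞) ^ (-(cl h)) * (2 * ENNReal.ofReal δ) := by
            rw [hx]; ring
    · intro ω hω
      rw [Set.mem_union] at hω
      push_neg at hω
      obtain ⟨gD1, gD2⟩ := hBDgood ω hω.1
      obtain ⟨gND1, gND2⟩ := hBNDgood ω hω.2
      rw [RhatD_bridge, RhatND_bridge, RD_bridge, RND_bridge, nD_cnt, nND_cnt]
      exact ⟨gD1, gD2, gND1, gND2⟩
  have hcnt : Countable ↥H := hHcount.to_subtype
  choose B hBmeas hBle hBgood using fun h : ↥H => key h.1 h.2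
  set Bad := ⋃ h : ↥H, B h with hBad
  have hBadmeas : MeasurableSet Bad := MeasurableSet.iUnion fun h => hBmeas h
  have hBadle : (Measure.pi fun _ : Fin n => P) Bad ≤ ENNReal.ofReal (2 * δ) := by
    calc (Measure.pi fun _ : Fin n => P) Bad
        ≤ ∑' h : ↥H, (Measure.pi fun _ : Fin n => P) (B h) := measure_iUnion_le _
      _ ≤ ∑' h : ↥H, (2 : ℝ≥0∞) ^ (-(cl h.1)) * (2 * ENNReal.ofReal δ) :=
          ENNReal.tsum_le_tsum fun h => hBle h
      _ = (∑' h : ↥H, (2 : ℝ≥0∞) ^ (-(cl h.1))) * (2 * ENNReal.ofReal δ) :=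
          ENNReal.tsum_mul_right
      _ ≤ 1 * (2 * ENNReal.ofReal δ) := mul_le_mul_left hKraft _
      _ = ENNReal.ofReal (2 * δ) := by
          rw [one_mul, ENNReal.ofReal_mul (by norm_num : (0:ℝ) ≤ 2)]
          norm_num
  have hsub : Badᶜ ⊆
      {ω | RND P (hhat ω) ≤ RND P hstar + 2 * pen (cl hstar) δ (nND hstar ω) ∧
        RD P (hhat ω) ≤ ENNReal.ofReal α + 2 * pen (cl (hhat ω)) δ (nD (hhat ω) ω)} := by
    intro ω hω
    simp only [Set.mem_compl_iff, hBad, Set.mem_iUnion, not_exists] at hω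
    obtain ⟨g1, g2, g3, g4⟩ := hBgood ⟨hhat ω, hhat_mem ω⟩ ω (hω ⟨hhat ω, hhat_mem ω⟩)
    obtain ⟨s1, s2, s3, s4⟩ := hBgood ⟨hstar, hstar_mem⟩ ω (hω ⟨hstar, hstar_mem⟩)
    constructor
    · have hfeas : RhatD hstar ω ≤ ENNReal.ofReal α + pen (cl hstar) δ (nD hstar ω) :=
        s1.trans (add_le_add_left hstar_feas _)
      have hmin := hhat_min ω hstar hstar_mem hfeas
      calc RND P (hhat ω)
          ≤ RhatND (hhat ω) ω + pen (cl (hhat ω)) δ (nND (hhat ω) ω) := g4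
        _ ≤ RhatND hstar ω + pen (cl hstar) δ (nND hstar ω) := hmin
        _ ≤ (RND P hstar + pen (cl hstar) δ (nND hstar ω)) + pen (cl hstar) δ (nND hstar ω) :=
            add_le_add_left s3 _
        _ = RND P hstar + 2 * pen (cl hstar) δ (nND hstar ω) := by
            rw [add_assoc, two_mul]
    · calc RD P (hhat ω)
          ≤ RhatD (hhat ω) ω + pen (cl (hhat ω)) δ (nD (hhat ω) ω) := g2
        _ ≤ (ENNReal.ofReal α + pen (cl (hhat ω)) δ (nD (hhat ω) ω)) +
              pen (cl (hhat ω)) δ (nD (hhat ω) ω) := add_le_add_left (hhat_feas ω) _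
        _ = ENNReal.ofReal α + 2 * pen (cl (hhat ω)) δ (nD (hhat ω) ω) := by
            rw [add_assoc, two_mul]
  calc ENNReal.ofReal (1 - 2 * δ)
      = 1 - ENNReal.ofReal (2 * δ) := by
        rw [ENNReal.ofReal_sub _ (by positivity), ENNReal.ofReal_one]
    _ ≤ 1 - (Measure.pi fun _ : Fin n => P) Bad := tsub_le_tsub_left hBadle 1
    _ = (Measure.pi fun _ : Fin n => P) Badᶜ := (prob_compl_eq_one_sub hBadmeas).symm
    _ ≤ _ := measure_mono hsub
end
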